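/- arXiv:2007.03462 — 4 statements merged into one kernel-verified Lean document; each statement's English description precedes it below -/
import Mathlib

section
/- Consider K users with local loss functions F_k : ℝ^d → ℝ (k = 1,…,K), each twice differentiable, γ-strongly convex, and with L-Lipschitz gradient (0 < γ ≤ L), and let F(w) = (1/K)·∑_{k=1}^K F_k(w) with minimizer w*. Fix ξ with 0 < ξ ≤ γ/L and a local accuracy η ∈ [0,1). For each global iterate w^{(n)} define G_k(w^{(n)}, h) = F_k(w^{(n)} + h) − ⟨∇F_k(w^{(n)}) − ξ·∇F(w^{(n)}), h⟩, and suppose the iterates satisfy w^{(n+1)} = w^{(n)} + (1/K)·∑_{k=1}^K h_k^{(n)}, where each h_k^{(n)} is an η-approximate minimizer of G_k(w^{(n)}, ·), i.e. G_k(w^{(n)}, h_k^{(n)}) − inf_h G_k(w^{(n)}, h) ≤ η·(G_k(w^{(n)}, 0) − inf_h G_k(w^{(n)}, h)). Then for every ε ∈ (0,1) and every n ≥ (2L²/(γ²ξ(1−η)))·ln(1/ε), one has F(w^{(n)}) − F(w*) ≤ ε·(F(w^{(0)}) − F(w*)). -/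
open scoped RealInnerProductSpace BigOperators

section aux
variable {d : ℕ}

lemma fl_grad_inner_eq (f : EuclideanSpace ℝ (Fin d) → ℝ) (x u : EuclideanSpace ℝ (Fin d)) :
    (inner ℝ (gradient f x) u : ℝ) = fderiv ℝ f x u := by
  rw [gradient]; exact InnerProductSpace.toDual_symm_apply

lemma fl_hasDerivAt_line (f : EuclideanSpace ℝ (Fin d) → ℝ) (hf : Differentiable ℝ f)
    (x v : EuclideanSpace ℝ (Fin d)) (t : ℝ) :
    HasDerivAt (fun s : ℝ => f (x + s • v)) (inner ℝ (gradient f (x + t • v)) v : ℝ) t := by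
  have hc : HasDerivAt (fun s : ℝ => x + s • v) v t := by
    simpa using ((hasDerivAt_id t).smul_const v).const_add x
  have h2 := (hf (x + t • v)).hasFDerivAt.comp_hasDerivAt t hc
  rw [fl_grad_inner_eq f]; exact h2

lemma fl_smooth_upper {L : ℝ} (hL0 : 0 < L) (f : EuclideanSpace ℝ (Fin d) → ℝ)
    (hf : Differentiable ℝ f) (hlip : LipschitzWith L.toNNReal (gradient f))
    (x v : EuclideanSpace ℝ (Fin d)) :
    f (x + v) ≤ f x + (inner ℝ (gradient f x) v : ℝ) + L / 2 * ‖v‖ ^ 2 := by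
  set ψ : ℝ → ℝ := fun s => f (x + s • v) - s * (inner ℝ (gradient f x) v : ℝ)
      - L * s ^ 2 / 2 * ‖v‖ ^ 2 with hψ
  have key : ∀ t : ℝ, HasDerivAt ψ
      ((inner ℝ (gradient f (x + t • v)) v : ℝ) - (inner ℝ (gradient f x) v : ℝ)
        - L * t * ‖v‖ ^ 2) t := by
    intro t
    have h1 := fl_hasDerivAt_line f hf x v t
    have h2 : HasDerivAt (fun s : ℝ => s * (inner ℝ (gradient f x) v : ℝ))
        (inner ℝ (gradient f x) v : ℝ) t := by
      simpa using (hasDerivAt_id t).mul_const (inner ℝ (gradient f x) v : ℝ)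
    have h3 : HasDerivAt (fun s : ℝ => L * s ^ 2 / 2 * ‖v‖ ^ 2) (L * t * ‖v‖ ^ 2) t := by
      have := (((hasDerivAt_pow 2 t).const_mul L).div_const 2).mul_const (‖v‖ ^ 2)
      refine this.congr_deriv ?_
      ring
    exact (h1.sub h2).sub h3
  have hderiv : ∀ t ∈ Set.Ioo (0:ℝ) 1, deriv ψ t ≤ 0 := by
    intro t ht
    rw [(key t).deriv]
    have hcs : (inner ℝ (gradient f (x + t • v)) v : ℝ) - (inner ℝ (gradient f x) v : ℝ)
        ≤ ‖gradient f (x + t • v) - gradient f x‖ * ‖v‖ := by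
      rw [← inner_sub_left]
      exact real_inner_le_norm _ _
    have hlb : ‖gradient f (x + t • v) - gradient f x‖ ≤ L * (t * ‖v‖) := by
      have := hlip.dist_le_mul (x + t • v) x
      rw [dist_eq_norm, dist_eq_norm] at this
      have h4 : (x + t • v) - x = t • v := by abel
      rw [h4] at this
      rw [norm_smul] at this
      calc ‖gradient f (x + t • v) - gradient f x‖ ≤ (L.toNNReal : ℝ) * (|t| * ‖v‖) := this
        _ = L * (t * ‖v‖) := by
            rw [Real.coe_toNNReal L hL0.le, abs_of_pos ht.1]
    nlinarith [norm_nonneg v, hcs, hlb, mul_le_mul_of_nonneg_right hlb (norm_nonneg v)]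
  have hcont : ContinuousOn ψ (Set.Icc 0 1) := by
    intro t _
    exact ((key t).continuousAt).continuousWithinAt
  have hanti : AntitoneOn ψ (Set.Icc (0:ℝ) 1) := by
    apply antitoneOn_of_deriv_nonpos (convex_Icc 0 1) hcont
    · intro t ht
      rw [interior_Icc] at ht
      exact (key t).differentiableAt.differentiableWithinAt
    · intro t ht
      rw [interior_Icc] at ht
      exact hderiv t ht
  have h01 := hanti (Set.mem_Icc.2 ⟨le_refl 0, zero_le_one⟩)
      (Set.mem_Icc.2 ⟨zero_le_one, le_refl 1⟩) zero_le_one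
  simp only [hψ, one_smul, zero_smul, add_zero, one_pow, zero_pow, one_mul, zero_mul,
    mul_zero, sub_zero, zero_div] at h01
  nlinarith [h01]

lemma fl_strong_lower {γ : ℝ} (f : EuclideanSpace ℝ (Fin d) → ℝ)
    (hf : Differentiable ℝ f) (hsc : StrongConvexOn Set.univ γ f)
    (x v : EuclideanSpace ℝ (Fin d)) :
    f x + (inner ℝ (gradient f x) v : ℝ) + γ / 2 * ‖v‖ ^ 2 ≤ f (x + v) := by
  have hder : HasDerivAt (fun s : ℝ => f (x + s • v)) (inner ℝ (gradient f x) v : ℝ) 0 := by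
    have := fl_hasDerivAt_line f hf x v 0
    simpa using this
  have hslope : Filter.Tendsto (fun t : ℝ => (f (x + t • v) - f x) / t) (nhdsWithin 0 (Set.Ioi 0))
      (nhds (inner ℝ (gradient f x) v : ℝ)) := by
    have h1 := hasDerivAt_iff_tendsto_slope.1 hder
    have h2 : nhdsWithin (0:ℝ) (Set.Ioi 0) ≤ nhdsWithin 0 {0}ᶜ :=
      nhdsWithin_mono 0 (fun y hy => ne_of_gt hy)
    have h3 := h1.mono_left h2
    refine h3.congr' ?_
    filter_upwards [self_mem_nhdsWithin] with t ht
    simp [slope_def_field]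
  have hRHS : Filter.Tendsto (fun t : ℝ => f (x + v) - f x - (1 - t) * (γ / 2 * ‖v‖ ^ 2))
      (nhdsWithin 0 (Set.Ioi 0)) (nhds (f (x + v) - f x - γ / 2 * ‖v‖ ^ 2)) := by
    have : Filter.Tendsto (fun t : ℝ => f (x + v) - f x - (1 - t) * (γ / 2 * ‖v‖ ^ 2))
        (nhds 0) (nhds (f (x + v) - f x - (1 - 0) * (γ / 2 * ‖v‖ ^ 2))) := by
      apply Filter.Tendsto.sub tendsto_const_nhds
      exact ((tendsto_const_nhds.sub Filter.tendsto_id).mul tendsto_const_nhds)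
    simpa using this.mono_left nhdsWithin_le_nhds
  have hle : (inner ℝ (gradient f x) v : ℝ) ≤ f (x + v) - f x - γ / 2 * ‖v‖ ^ 2 := by
    refine le_of_tendsto_of_tendsto hslope hRHS ?_
    filter_upwards [Ioo_mem_nhdsGT_of_mem (Set.mem_Ico.2 ⟨le_refl (0:ℝ), zero_lt_one⟩)] with t ht
    have hconv := hsc.2 (Set.mem_univ (x + v)) (Set.mem_univ x)
        ht.1.le (by linarith [ht.2] : (0:ℝ) ≤ 1 - t) (by ring)
    have he : t • (x + v) + (1 - t) • x = x + t • v := by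
      rw [smul_add, sub_smul, one_smul]; abel
    have hn : ‖(x + v) - x‖ = ‖v‖ := by rw [add_sub_cancel_left]
    rw [he, hn] at hconv
    rw [div_le_iff₀ ht.1]
    simp only [smul_eq_mul] at hconv
    nlinarith [hconv]
  linarith


set_option maxHeartbeats 1000000 in
/-- **Lemma 1** (convergence rate of the federated learning algorithm): with `K` users whose
local losses `F k` are `γ`-strongly convex with `L`-Lipschitz gradient, if each user solves its
local subproblem `G n k` to relative accuracy `η` and the server averages the updates, then after
`n ≥ 2L²/(γ²ξ(1-η)) · ln(1/ε)` global iterations the global loss gap shrinks by a factor `ε`. -/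
theorem fl_global_convergence {d K : ℕ} (hK : 0 < K) (γ L : ℝ) (hγ : 0 < γ) (hγL : γ ≤ L)
    (F : Fin K → EuclideanSpace ℝ (Fin d) → ℝ)
    (hF2 : ∀ k, ContDiff ℝ 2 (F k))
    (hsc : ∀ k, StrongConvexOn Set.univ γ (F k))
    (hlip : ∀ k, LipschitzWith L.toNNReal (gradient (F k)))
    (Fglob : EuclideanSpace ℝ (Fin d) → ℝ)
    (hFglob : Fglob = fun w => (K : ℝ)⁻¹ * ∑ k, F k w)
    (wstar : EuclideanSpace ℝ (Fin d))
    (hwstar : ∀ w, Fglob wstar ≤ Fglob w)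
    (ξ η : ℝ) (hξ0 : 0 < ξ) (hξ : ξ ≤ γ / L) (hη0 : 0 ≤ η) (hη1 : η < 1)
    (w : ℕ → EuclideanSpace ℝ (Fin d))
    (h : ℕ → Fin K → EuclideanSpace ℝ (Fin d))
    (G : ℕ → Fin K → EuclideanSpace ℝ (Fin d) → ℝ)
    (hG : ∀ n k hk, G n k hk =
      F k (w n + hk) - (inner ℝ (gradient (F k) (w n) - ξ • gradient Fglob (w n)) hk : ℝ))
    (hupd : ∀ n, w (n + 1) = w n + (K : ℝ)⁻¹ • ∑ k, h n k)
    (happrox : ∀ n k,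
      G n k (h n k) - ⨅ hh, G n k hh ≤ η * (G n k 0 - ⨅ hh, G n k hh))
    (ε : ℝ) (hε0 : 0 < ε) (hε1 : ε < 1)
    (n : ℕ)
    (hn : 2 * L ^ 2 / (γ ^ 2 * ξ * (1 - η)) * Real.log (1 / ε) ≤ (n : ℝ)) :
    Fglob (w n) - Fglob wstar ≤ ε * (Fglob (w 0) - Fglob wstar) := by
  have hL0 : 0 < L := lt_of_lt_of_le hγ hγL
  have h1η : 0 < 1 - η := by linarith
  have hdiff : ∀ k, Differentiable ℝ (F k) := fun k => (hF2 k).differentiable two_ne_zero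
  have hK0 : (0:ℝ) < K := Nat.cast_pos.2 hK
  have hKne : (K:ℝ) ≠ 0 := ne_of_gt hK0
  have hKinv : (0:ℝ) ≤ (K:ℝ)⁻¹ := by positivity
  have hsumdiff : Differentiable ℝ (fun y => ∑ k, F k y) :=
    Differentiable.fun_sum fun k _ => hdiff k
  have hFgd : Differentiable ℝ Fglob := by
    rw [hFglob]; exact hsumdiff.const_mul _
  -- gradient of Fglob paired with a vector
  have hgradF : ∀ x u : EuclideanSpace ℝ (Fin d), (inner ℝ (gradient Fglob x) u : ℝ)
      = (K:ℝ)⁻¹ * ∑ k, (inner ℝ (gradient (F k) x) u : ℝ) := by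
    intro x u
    rw [fl_grad_inner_eq]
    have h1 : fderiv ℝ Fglob x = (K:ℝ)⁻¹ • fderiv ℝ (fun y => ∑ k, F k y) x := by
      rw [hFglob]; exact fderiv_const_mul (hsumdiff x) _
    rw [h1, fderiv_fun_sum (fun k _ => hdiff k x)]
    rw [ContinuousLinearMap.smul_apply, ContinuousLinearMap.sum_apply, smul_eq_mul]
    congr 1
    exact Finset.sum_congr rfl fun k _ => (fl_grad_inner_eq (F k) x u).symm
  -- descent lemma for Fglob
  have hFg_upper : ∀ x v : EuclideanSpace ℝ (Fin d),
      Fglob (x + v) ≤ Fglob x + (inner ℝ (gradient Fglob x) v : ℝ) + L/2 * ‖v‖^2 := by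
    intro x v
    have hsum : ∑ k, F k (x+v)
        ≤ ∑ k, (F k x + (inner ℝ (gradient (F k) x) v : ℝ) + L/2 * ‖v‖^2) :=
      Finset.sum_le_sum (fun k _ => fl_smooth_upper hL0 (F k) (hdiff k) (hlip k) x v)
    have h2 : ∑ k, (F k x + (inner ℝ (gradient (F k) x) v : ℝ) + L/2 * ‖v‖^2)
        = ∑ k, F k x + ∑ k, (inner ℝ (gradient (F k) x) v : ℝ) + (K:ℝ) * (L/2 * ‖v‖^2) := by
      rw [Finset.sum_add_distrib, Finset.sum_add_distrib, Finset.sum_const,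
        Finset.card_univ, Fintype.card_fin]
      simp [nsmul_eq_mul]
    rw [hgradF x v, hFglob]
    simp only []
    have h3 := mul_le_mul_of_nonneg_left (hsum.trans_eq h2) hKinv
    calc (K:ℝ)⁻¹ * ∑ k, F k (x+v)
        ≤ (K:ℝ)⁻¹ * (∑ k, F k x + ∑ k, (inner ℝ (gradient (F k) x) v : ℝ)
            + (K:ℝ) * (L/2 * ‖v‖^2)) := h3
      _ = (K:ℝ)⁻¹ * ∑ k, F k x + (K:ℝ)⁻¹ * ∑ k, (inner ℝ (gradient (F k) x) v : ℝ)
            + L/2 * ‖v‖^2 := by field_simp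
  -- strong convexity lower bound for Fglob
  have hFg_lower : ∀ x v : EuclideanSpace ℝ (Fin d),
      Fglob x + (inner ℝ (gradient Fglob x) v : ℝ) + γ/2 * ‖v‖^2 ≤ Fglob (x + v) := by
    intro x v
    have hsum : ∑ k, (F k x + (inner ℝ (gradient (F k) x) v : ℝ) + γ/2 * ‖v‖^2)
        ≤ ∑ k, F k (x+v) :=
      Finset.sum_le_sum (fun k _ => fl_strong_lower (F k) (hdiff k) (hsc k) x v)
    have h2 : ∑ k, (F k x + (inner ℝ (gradient (F k) x) v : ℝ) + γ/2 * ‖v‖^2)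
        = ∑ k, F k x + ∑ k, (inner ℝ (gradient (F k) x) v : ℝ) + (K:ℝ) * (γ/2 * ‖v‖^2) := by
      rw [Finset.sum_add_distrib, Finset.sum_add_distrib, Finset.sum_const,
        Finset.card_univ, Fintype.card_fin]
      simp [nsmul_eq_mul]
    rw [hgradF x v, hFglob]
    simp only []
    have h3 := mul_le_mul_of_nonneg_left (h2.symm.trans_le hsum) hKinv
    calc (K:ℝ)⁻¹ * ∑ k, F k x + (K:ℝ)⁻¹ * ∑ k, (inner ℝ (gradient (F k) x) v : ℝ)
          + γ/2 * ‖v‖^2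
        = (K:ℝ)⁻¹ * (∑ k, F k x + ∑ k, (inner ℝ (gradient (F k) x) v : ℝ)
            + (K:ℝ) * (γ/2 * ‖v‖^2)) := by field_simp
      _ ≤ (K:ℝ)⁻¹ * ∑ k, F k (x+v) := h3
  -- Polyak–Łojasiewicz inequality
  have hPL : ∀ x : EuclideanSpace ℝ (Fin d),
      2*γ*(Fglob x - Fglob wstar) ≤ ‖gradient Fglob x‖^2 := by
    intro x
    have h1 := hFg_lower x (wstar - x)
    have he : x + (wstar - x) = wstar := by abel
    rw [he] at h1
    have hcs : -(‖gradient Fglob x‖ * ‖wstar - x‖)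
        ≤ (inner ℝ (gradient Fglob x) (wstar - x) : ℝ) := by
      have h2 := abs_real_inner_le_norm (gradient Fglob x) (wstar - x)
      have h3 := neg_abs_le (inner ℝ (gradient Fglob x) (wstar - x) : ℝ)
      linarith [h3, neg_le_neg h2]
    nlinarith [sq_nonneg (‖gradient Fglob x‖ - γ * ‖wstar - x‖), hγ,
      norm_nonneg (gradient Fglob x), norm_nonneg (wstar - x)]
  -- one-step contraction
  have step : ∀ m, Fglob (w (m+1)) - Fglob wstar
      ≤ (1 - (1-η)*ξ*γ/L) * (Fglob (w m) - Fglob wstar) := by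
    intro m
    have hg : gradient Fglob (w m) = gradient Fglob (w m) := rfl
    set g : EuclideanSpace ℝ (Fin d) := gradient Fglob (w m) with hgdef
    set c : ℝ := ξ^2 * ‖g‖^2 / (2*L) with hc
    have hc0 : 0 ≤ c := by positivity
    have hGval : ∀ k hk, G m k hk
        = F k (w m + hk) - (inner ℝ (gradient (F k) (w m) - ξ • g) hk : ℝ) := by
      intro k hk; rw [hG, hgdef]
    have perk : ∀ k, ξ * (inner ℝ g (h m k) : ℝ) ≤ -(γ/2 * ‖h m k‖^2) - (1-η) * c := by
      intro k
      have hG0 : G m k 0 = F k (w m) := by rw [hGval]; simp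
      have hinnersplit : ∀ hk : EuclideanSpace ℝ (Fin d),
          (inner ℝ (gradient (F k) (w m)) hk : ℝ)
            - (inner ℝ (gradient (F k) (w m) - ξ • g) hk : ℝ) = ξ * (inner ℝ g hk : ℝ) := by
        intro hk
        rw [inner_sub_left, real_inner_smul_left]; ring
      have hlb : ∀ hk, F k (w m) - ξ^2 * ‖g‖^2/(2*γ) ≤ G m k hk := by
        intro hk
        have h1 := fl_strong_lower (F k) (hdiff k) (hsc k) (w m) hk
        have hcs : -(ξ * (‖g‖ * ‖hk‖)) ≤ ξ * (inner ℝ g hk : ℝ) := by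
          have h2 := abs_real_inner_le_norm g hk
          have h3 := neg_abs_le (inner ℝ g hk : ℝ)
          nlinarith [hξ0.le]
        rw [hGval]
        have h4 := hinnersplit hk
        have hident : γ/2*‖hk‖^2 - ξ*(‖g‖*‖hk‖) + ξ^2*‖g‖^2/(2*γ)
            = (γ*‖hk‖ - ξ*‖g‖)^2/(2*γ) := by field_simp; ring
        have hnn : 0 ≤ (γ*‖hk‖ - ξ*‖g‖)^2/(2*γ) := by positivity
        linarith
      have hbdd : BddBelow (Set.range (G m k)) := by
        refine ⟨F k (w m) - ξ^2 * ‖g‖^2/(2*γ), ?_⟩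
        rintro y ⟨hk, rfl⟩
        exact hlb hk
      have hinf_le : (⨅ hh, G m k hh) ≤ F k (w m) - c := by
        refine (ciInf_le hbdd ((-(ξ/L)) • g)).trans ?_
        rw [hGval]
        have h2 := fl_smooth_upper hL0 (F k) (hdiff k) (hlip k) (w m) ((-(ξ/L)) • g)
        have h3 := hinnersplit ((-(ξ/L)) • g)
        have h4 : (inner ℝ g ((-(ξ/L)) • g) : ℝ) = (-(ξ/L)) * ‖g‖^2 := by
          rw [real_inner_smul_right, real_inner_self_eq_norm_sq]
        have h5 : ‖(-(ξ/L)) • g‖^2 = (ξ/L)^2 * ‖g‖^2 := by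
          rw [norm_smul]
          rw [Real.norm_eq_abs, mul_pow, sq_abs]
          ring_nf
        have h6 : F k (w m) + ξ * ((-(ξ/L)) * ‖g‖^2) + L/2 * ((ξ/L)^2 * ‖g‖^2)
            = F k (w m) - c := by
          rw [hc]; field_simp; ring
        rw [h4] at h3
        rw [h5] at h2
        linarith
      have happ := happrox m k
      have hGh : G m k (h m k) ≤ F k (w m) - (1-η) * c := by
        have h1 : G m k (h m k) ≤ η * G m k 0 + (1-η) * (⨅ hh, G m k hh) := by linarith
        have h2 : (1-η) * (⨅ hh, G m k hh) ≤ (1-η) * (F k (w m) - c) :=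
          mul_le_mul_of_nonneg_left hinf_le h1η.le
        rw [hG0] at h1
        linarith
      have h1 := fl_strong_lower (F k) (hdiff k) (hsc k) (w m) (h m k)
      rw [hGval] at hGh
      have h2 := hinnersplit (h m k)
      linarith
    -- combine over users
    have hup := hFg_upper (w m) ((K:ℝ)⁻¹ • ∑ k, h m k)
    rw [← hupd m] at hup
    have hinner : (inner ℝ g ((K:ℝ)⁻¹ • ∑ k, h m k) : ℝ)
        = (K:ℝ)⁻¹ * ∑ k, (inner ℝ g (h m k) : ℝ) := by
      rw [real_inner_smul_right, inner_sum]
    have hnorm : ‖(K:ℝ)⁻¹ • ∑ k, h m k‖^2 ≤ (K:ℝ)⁻¹ * ∑ k, ‖h m k‖^2 := by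
      have h1 : ‖∑ k, h m k‖ ≤ ∑ k, ‖h m k‖ := norm_sum_le _ _
      have h2 : (∑ k, ‖h m k‖)^2 ≤ (K:ℝ) * ∑ k, ‖h m k‖^2 := by
        have h3 := sq_sum_le_card_mul_sum_sq (s := (Finset.univ : Finset (Fin K)))
          (f := fun k => ‖h m k‖)
        simpa using h3
      have h4 : ‖(K:ℝ)⁻¹ • ∑ k, h m k‖ = (K:ℝ)⁻¹ * ‖∑ k, h m k‖ := by
        rw [norm_smul, Real.norm_eq_abs, abs_of_nonneg hKinv]
      have h5 : ‖∑ k, h m k‖^2 ≤ (∑ k, ‖h m k‖)^2 :=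
        pow_le_pow_left₀ (norm_nonneg _) h1 2
      calc ‖(K:ℝ)⁻¹ • ∑ k, h m k‖^2 = (K:ℝ)⁻¹^2 * ‖∑ k, h m k‖^2 := by rw [h4]; ring
        _ ≤ (K:ℝ)⁻¹^2 * ((K:ℝ) * ∑ k, ‖h m k‖^2) := by
            apply mul_le_mul_of_nonneg_left (h5.trans h2) (by positivity)
        _ = (K:ℝ)⁻¹ * ∑ k, ‖h m k‖^2 := by field_simp
    have hsum_inner : ∑ k, (inner ℝ g (h m k) : ℝ)
        ≤ ∑ k, ((-(γ/2 * ‖h m k‖^2) - (1-η)*c)/ξ) := by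
      apply Finset.sum_le_sum
      intro k _
      rw [le_div_iff₀ hξ0]
      linarith [perk k, mul_comm (inner ℝ g (h m k) : ℝ) ξ]
    have hperk2 : ∀ k : Fin K, (-(γ/2 * ‖h m k‖^2) - (1-η)*c)/ξ + L/2 * ‖h m k‖^2
        ≤ -((1-η)*c/ξ) := by
      intro k
      have hξL : ξ * L ≤ γ := by
        rw [← le_div_iff₀ hL0] at *
        exact hξ
      have hs : 0 ≤ ‖h m k‖^2 := sq_nonneg _
      have key : (-(γ/2 * ‖h m k‖^2) - (1-η)*c)/ξ + L/2 * ‖h m k‖^2 - (-((1-η)*c/ξ))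
          = ‖h m k‖^2/(2*ξ) * (L*ξ - γ) := by
        field_simp; ring
      have hle : ‖h m k‖^2/(2*ξ) * (L*ξ - γ) ≤ 0 := by
        apply mul_nonpos_of_nonneg_of_nonpos (by positivity)
        nlinarith
      linarith
    have hsum2 : ∑ k, ((-(γ/2 * ‖h m k‖^2) - (1-η)*c)/ξ + L/2 * ‖h m k‖^2)
        ≤ (K:ℝ) * (-((1-η)*c/ξ)) := by
      calc ∑ k, ((-(γ/2 * ‖h m k‖^2) - (1-η)*c)/ξ + L/2 * ‖h m k‖^2)
          ≤ ∑ _k : Fin K, (-((1-η)*c/ξ)) := Finset.sum_le_sum (fun k _ => hperk2 k)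
        _ = (K:ℝ) * (-((1-η)*c/ξ)) := by
            rw [Finset.sum_const, Finset.card_univ, Fintype.card_fin, nsmul_eq_mul]
    have hfinal : Fglob (w (m+1)) ≤ Fglob (w m) - (1-η)*c/ξ := by
      have hA : (inner ℝ g ((K:ℝ)⁻¹ • ∑ k, h m k) : ℝ) + L/2 * ‖(K:ℝ)⁻¹ • ∑ k, h m k‖^2
          ≤ (K:ℝ)⁻¹ * (∑ k, ((-(γ/2 * ‖h m k‖^2) - (1-η)*c)/ξ + L/2 * ‖h m k‖^2)) := by
        rw [hinner]
        have hB : (K:ℝ)⁻¹ * ∑ k, (inner ℝ g (h m k) : ℝ)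
            ≤ (K:ℝ)⁻¹ * ∑ k, ((-(γ/2 * ‖h m k‖^2) - (1-η)*c)/ξ) :=
          mul_le_mul_of_nonneg_left hsum_inner hKinv
        have hC : L/2 * ‖(K:ℝ)⁻¹ • ∑ k, h m k‖^2 ≤ L/2 * ((K:ℝ)⁻¹ * ∑ k, ‖h m k‖^2) :=
          mul_le_mul_of_nonneg_left hnorm (by positivity)
        rw [Finset.sum_add_distrib, mul_add]
        rw [Finset.mul_sum, Finset.mul_sum, Finset.mul_sum] at *
        refine add_le_add hB (hC.trans_eq ?_)
        apply Finset.sum_congr rfl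
        intro k _
        ring
      have hD := mul_le_mul_of_nonneg_left hsum2 hKinv
      have hE : (K:ℝ)⁻¹ * ((K:ℝ) * (-((1-η)*c/ξ))) = -((1-η)*c/ξ) := by
        rw [← mul_assoc, inv_mul_cancel₀ hKne, one_mul]
      linarith [hup, hA.trans (hD.trans_eq hE)]
    have hDval : (1-η)*c/ξ = (1-η)*ξ/(2*L) * ‖g‖^2 := by
      rw [hc]; field_simp
    have hco : 0 ≤ (1-η)*ξ/(2*L) :=
      div_nonneg (mul_nonneg h1η.le hξ0.le) (by linarith)
    have h2 := mul_le_mul_of_nonneg_left (hPL (w m)) hco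
    have h3 : (1-η)*ξ/(2*L) * (2*γ*(Fglob (w m) - Fglob wstar))
        = ((1-η)*ξ*γ/L) * (Fglob (w m) - Fglob wstar) := by
      field_simp
    have hexp : (1 - (1-η)*ξ*γ/L) * (Fglob (w m) - Fglob wstar)
        = (Fglob (w m) - Fglob wstar) - ((1-η)*ξ*γ/L) * (Fglob (w m) - Fglob wstar) := by
      ring
    rw [hexp]
    rw [hDval] at hfinal
    rw [h3] at h2
    rw [← hgdef] at h2
    linarith
  -- iterate
  set q : ℝ := 1 - (1-η)*ξ*γ/L with hqdef
  have hγL1 : γ/L ≤ 1 := (div_le_one hL0).2 hγL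
  have hξ1 : ξ ≤ 1 := hξ.trans hγL1
  have hcq0 : 0 < (1-η)*ξ*γ/L := by
    apply div_pos _ hL0
    exact mul_pos (mul_pos h1η hξ0) hγ
  have hcq1 : (1-η)*ξ*γ/L ≤ 1 := by
    have h1 : (1-η)*ξ*γ/L = ((1-η)*ξ)*(γ/L) := by ring
    rw [h1]
    have h2 : (1-η)*ξ ≤ 1 := by nlinarith
    have h3 : 0 ≤ γ/L := div_nonneg hγ.le hL0.le
    nlinarith
  have hq0 : 0 ≤ q := by rw [hqdef]; linarith
  have gapnn : ∀ m, 0 ≤ Fglob (w m) - Fglob wstar := fun m => sub_nonneg.2 (hwstar _)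
  have iter : ∀ m, Fglob (w m) - Fglob wstar ≤ q^m * (Fglob (w 0) - Fglob wstar) := by
    intro m
    induction m with
    | zero => simp
    | succ m ih =>
      calc Fglob (w (m+1)) - Fglob wstar
          ≤ q * (Fglob (w m) - Fglob wstar) := step m
        _ ≤ q * (q^m * (Fglob (w 0) - Fglob wstar)) := mul_le_mul_of_nonneg_left ih hq0
        _ = q^(m+1) * (Fglob (w 0) - Fglob wstar) := by ring
  -- exponential bound
  have hA : 0 < γ^2*ξ*(1-η) := by
    apply mul_pos (mul_pos (by positivity) hξ0) h1η
  have h2L2 : (0:ℝ) < 2*L^2 := by positivity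
  have hkey : Real.log (1/ε) ≤ ((1-η)*ξ*γ/L) * n := by
    have hlog0 : 0 < Real.log (1/ε) := Real.log_pos ((lt_div_iff₀ hε0).2 (by linarith))
    have h1 : Real.log (1/ε) ≤ (n:ℝ) * (γ^2*ξ*(1-η)) / (2*L^2) := by
      have h2 := mul_le_mul_of_nonneg_right hn
        (le_of_lt (div_pos hA h2L2))
      have h3 : (2*L^2/(γ^2*ξ*(1-η)) * Real.log (1/ε)) * ((γ^2*ξ*(1-η))/(2*L^2))
          = Real.log (1/ε) := by
        field_simp
      rw [h3] at h2
      calc Real.log (1/ε) ≤ (n:ℝ) * ((γ^2*ξ*(1-η))/(2*L^2)) := h2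
        _ = (n:ℝ) * (γ^2*ξ*(1-η)) / (2*L^2) := by ring
    have h4 : (n:ℝ) * (γ^2*ξ*(1-η)) / (2*L^2) ≤ ((1-η)*ξ*γ/L) * n := by
      rw [div_le_iff₀ h2L2]
      have h5 : ((1-η)*ξ*γ/L) * (2*L^2) = 2*(1-η)*ξ*γ*L := by field_simp
      have h6 : γ^2*ξ*(1-η) ≤ 2*(1-η)*ξ*γ*L := by
        nlinarith [mul_nonneg (mul_nonneg (mul_nonneg hξ0.le h1η.le) hγ.le)
          (by linarith : (0:ℝ) ≤ 2*L - γ)]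
      calc (n:ℝ) * (γ^2*ξ*(1-η)) ≤ (n:ℝ) * (2*(1-η)*ξ*γ*L) :=
            mul_le_mul_of_nonneg_left h6 (Nat.cast_nonneg n)
        _ = ((1-η)*ξ*γ/L) * (2*L^2) * n := by field_simp
        _ = ((1-η)*ξ*γ/L) * n * (2*L^2) := by ring
    linarith
  have hqexp : q ≤ Real.exp (-((1-η)*ξ*γ/L)) := by
    have := Real.add_one_le_exp (-((1-η)*ξ*γ/L))
    rw [hqdef]; linarith
  have hpow : q^n ≤ Real.exp (-((1-η)*ξ*γ/L))^n := pow_le_pow_left₀ hq0 hqexp n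
  have hexp2 : Real.exp (-((1-η)*ξ*γ/L))^n = Real.exp (-(((1-η)*ξ*γ/L) * n)) := by
    rw [← Real.exp_nat_mul]
    congr 1
    ring
  have hfin : Real.exp (-(((1-η)*ξ*γ/L) * n)) ≤ ε := by
    rw [show ε = Real.exp (Real.log ε) from (Real.exp_log hε0).symm]
    apply Real.exp_le_exp.2
    have hlogε : Real.log (1/ε) = - Real.log ε := by rw [one_div, Real.log_inv]
    linarith
  have hqn : q^n ≤ ε := hpow.trans (hexp2 ▸ hfin)
  calc Fglob (w n) - Fglob wstar ≤ q^n * (Fglob (w 0) - Fglob wstar) := iter n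
    _ ≤ ε * (Fglob (w 0) - Fglob wstar) := mul_le_mul_of_nonneg_right hqn (gapnn 0)
end aux
end

section
/- Fix c > 0 and let u_c : (0, c/ln 2) → (0,∞) be the inverse function of z_c(b) = b·log₂(1 + c/b), i.e. u_c(z_c(b)) = b for all b > 0. Given positive constants T, a, A, f and s, define φ : (0,1) → ℝ by φ(η) = (1−η)·T/a + (A/f)·log₂ η, and on the set S = {η ∈ (0,1) : φ(η) > 0} define v(η) = s/φ(η). Then the set D = {η ∈ S : v(η) < c/ln 2} is convex, and the composite function η ↦ u_c(v(η)) is convex on D. -/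
open Real Set

/-- The rate function in natural log: `gg c b = b * log (1 + c/b)`. -/
private noncomputable def gg (c : ℝ) : ℝ → ℝ := fun b => b * Real.log (1 + c / b)

private lemma one_add_div_pos {c b : ℝ} (hc : 0 < c) (hb : 0 < b) : 0 < 1 + c / b := by
  positivity

private lemma hasDerivAt_gg (c : ℝ) (hc : 0 < c) {b : ℝ} (hb : 0 < b) :
    HasDerivAt (gg c) (Real.log (1 + c / b) - c / (b + c)) b := by
  have hb0 : b ≠ 0 := ne_of_gt hb
  have hpos : 0 < 1 + c / b := one_add_div_pos hc hb
  have h1 : HasDerivAt (fun x : ℝ => 1 + c / x) (c * -(b ^ 2)⁻¹) b := by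
    simpa [div_eq_mul_inv] using ((hasDerivAt_inv hb0).const_mul c).const_add 1
  have h2 : HasDerivAt (fun x : ℝ => Real.log (1 + c / x))
      (c * -(b ^ 2)⁻¹ / (1 + c / b)) b := h1.log (ne_of_gt hpos)
  have h3 := (hasDerivAt_id b).mul h2
  have hbc : b + c ≠ 0 := by positivity
  refine h3.congr_deriv ?_
  simp only [id]
  field_simp
  ring

private lemma hasDerivAt_gg' (c : ℝ) (hc : 0 < c) {b : ℝ} (hb : 0 < b) :
    HasDerivAt (fun x : ℝ => Real.log (1 + c / x) - c / (x + c))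
      (-(c ^ 2 / (b * (b + c) ^ 2))) b := by
  have hb0 : b ≠ 0 := ne_of_gt hb
  have hpos : 0 < 1 + c / b := one_add_div_pos hc hb
  have hbc : (0:ℝ) < b + c := by positivity
  have h1 : HasDerivAt (fun x : ℝ => 1 + c / x) (c * -(b ^ 2)⁻¹) b := by
    simpa [div_eq_mul_inv] using ((hasDerivAt_inv hb0).const_mul c).const_add 1
  have h2 : HasDerivAt (fun x : ℝ => Real.log (1 + c / x))
      (c * -(b ^ 2)⁻¹ / (1 + c / b)) b := h1.log (ne_of_gt hpos)
  have h3 : HasDerivAt (fun x : ℝ => x + c) 1 b := (hasDerivAt_id b).add_const c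
  have h4 : HasDerivAt (fun x : ℝ => (x + c)⁻¹) (-1 / (b + c) ^ 2) b :=
    h3.inv (ne_of_gt hbc)
  have h5 : HasDerivAt (fun x : ℝ => c * (x + c)⁻¹) (c * (-1 / (b + c) ^ 2)) b :=
    h4.const_mul c
  have h6 := h2.sub h5
  have hfun : (fun x : ℝ => Real.log (1 + c / x) - c / (x + c))
      = fun x : ℝ => Real.log (1 + c / x) - c * (x + c)⁻¹ := by
    funext x; rw [div_eq_mul_inv c (x + c)]
  rw [hfun]
  refine h6.congr_deriv ?_
  field_simp
  ring

private lemma gg_contOn (c : ℝ) (hc : 0 < c) : ContinuousOn (gg c) (Ioi 0) :=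
  fun x hx => (hasDerivAt_gg c hc hx).continuousAt.continuousWithinAt

/-- Key log lower bound: `c/(b+c) < log (1 + c/b)` for `b, c > 0`. -/
private lemma log_lower (c : ℝ) (hc : 0 < c) {b : ℝ} (hb : 0 < b) :
    c / (b + c) < Real.log (1 + c / b) := by
  have hbc : (0:ℝ) < b + c := by positivity
  have hpos : 0 < 1 + c / b := one_add_div_pos hc hb
  rw [lt_log_iff_exp_lt hpos]
  have hne : -(c / (b + c)) ≠ 0 := by
    simp only [ne_eq, neg_eq_zero, div_eq_zero_iff]
    push_neg
    exact ⟨ne_of_gt hc, fun h => absurd h (ne_of_gt hbc)⟩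
  have h1 : -(c / (b + c)) + 1 < Real.exp (-(c / (b + c))) := Real.add_one_lt_exp hne
  have h2 : 0 < -(c / (b + c)) + 1 := by
    have : c / (b + c) < 1 := by
      rw [div_lt_one hbc]; linarith
    linarith
  have h3 : (Real.exp (-(c / (b + c))))⁻¹ < (-(c / (b + c)) + 1)⁻¹ :=
    inv_strictAnti₀ h2 h1
  rw [← Real.exp_neg, neg_neg] at h3
  have h4 : (-(c / (b + c)) + 1)⁻¹ = 1 + c / b := by
    rw [show -(c / (b + c)) + 1 = b / (b + c) by field_simp; ring]
    rw [inv_div]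
    field_simp
  linarith [h3, h4 ▸ h3]

private lemma gg_strictMono (c : ℝ) (hc : 0 < c) : StrictMonoOn (gg c) (Ioi 0) := by
  apply strictMonoOn_of_deriv_pos (convex_Ioi 0) (gg_contOn c hc)
  intro x hx
  rw [interior_Ioi] at hx
  rw [(hasDerivAt_gg c hc hx).deriv]
  have := log_lower c hc hx
  linarith

private lemma gg_concave (c : ℝ) (hc : 0 < c) : ConcaveOn ℝ (Ioi 0) (gg c) := by
  apply concaveOn_of_hasDerivWithinAt2_nonpos (convex_Ioi 0) (gg_contOn c hc)
      (f' := fun b => Real.log (1 + c / b) - c / (b + c))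
      (f'' := fun b => -(c ^ 2 / (b * (b + c) ^ 2)))
  · intro x hx
    rw [interior_Ioi] at hx
    exact (hasDerivAt_gg c hc hx).hasDerivWithinAt
  · intro x hx
    rw [interior_Ioi] at hx
    exact (hasDerivAt_gg' c hc hx).hasDerivWithinAt
  · intro x hx
    rw [interior_Ioi] at hx
    have hx' : 0 < x := hx
    have hbc : (0:ℝ) < x + c := by linarith
    have : 0 < c ^ 2 / (x * (x + c) ^ 2) :=
      div_pos (pow_pos hc 2) (mul_pos hx' (pow_pos hbc 2))
    linarith

/-- `gg c b < c` for all `b > 0`. -/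
private lemma gg_lt (c : ℝ) (hc : 0 < c) {b : ℝ} (hb : 0 < b) : gg c b < c := by
  have hpos : 0 < 1 + c / b := one_add_div_pos hc hb
  have hne : 1 + c / b ≠ 1 := by
    have : 0 < c / b := by positivity
    intro h; linarith
  have h := Real.log_lt_sub_one_of_pos hpos hne
  have h2 : Real.log (1 + c / b) < c / b := by linarith
  have := mul_lt_mul_of_pos_left h2 hb
  unfold gg
  calc b * Real.log (1 + c / b) < b * (c / b) := this
    _ = c := by field_simp

/-- `gg c` is positive on `Ioi 0`. -/
private lemma gg_pos (c : ℝ) (hc : 0 < c) {b : ℝ} (hb : 0 < b) : 0 < gg c b := by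
  have hbc : (0:ℝ) < b + c := by positivity
  have h1 : 0 < c / (b + c) := by positivity
  have h2 := log_lower c hc hb
  have : 0 < Real.log (1 + c / b) := lt_trans h1 h2
  exact mul_pos hb this

/-- Surjectivity of `gg c` onto `(0, c)`. -/
private lemma gg_surj (c : ℝ) (hc : 0 < c) {r : ℝ} (hr0 : 0 < r) (hrc : r < c) :
    ∃ b, 0 < b ∧ gg c b = r := by
  -- small b
  set K : ℝ := 2 * Real.sqrt (2 * c) with hK
  have hKpos : 0 < K := by positivity
  set b₁ : ℝ := min c ((r / (K + 1)) ^ 2) with hb₁def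
  have hb₁pos : 0 < b₁ := by
    apply lt_min hc
    positivity
  have hb₁c : b₁ ≤ c := min_le_left _ _
  have hsmall : gg c b₁ < r := by
    have hpos1 : 0 < 1 + c / b₁ := one_add_div_pos hc hb₁pos
    have h2c : 0 < 2 * c / b₁ := by positivity
    have hle : 1 + c / b₁ ≤ 2 * c / b₁ := by
      have h1 : (1:ℝ) ≤ c / b₁ := (one_le_div hb₁pos).2 hb₁c
      have : 2 * c / b₁ = c / b₁ + c / b₁ := by ring
      linarith
    have hlog1 : Real.log (1 + c / b₁) ≤ Real.log (2 * c / b₁) :=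
      Real.log_le_log hpos1 hle
    -- log y ≤ 2 √y
    have hlog2 : Real.log (2 * c / b₁) ≤ 2 * Real.sqrt (2 * c / b₁) := by
      have hy : (0:ℝ) ≤ 2 * c / b₁ := le_of_lt h2c
      have hs : 0 < Real.sqrt (2 * c / b₁) := Real.sqrt_pos.2 h2c
      have := Real.log_le_sub_one_of_pos hs
      have hls : Real.log (Real.sqrt (2 * c / b₁)) = Real.log (2 * c / b₁) / 2 :=
        Real.log_sqrt hy
      rw [hls] at this
      nlinarith [hs.le]
    have hsq : Real.sqrt (2 * c / b₁) = Real.sqrt (2 * c) / Real.sqrt b₁ :=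
      Real.sqrt_div (by positivity) b₁
    have hchain : gg c b₁ ≤ K * Real.sqrt b₁ := by
      unfold gg
      have hlog : Real.log (1 + c / b₁) ≤ 2 * (Real.sqrt (2 * c) / Real.sqrt b₁) := by
        rw [← hsq]; linarith
      have := mul_le_mul_of_nonneg_left hlog hb₁pos.le
      have heq : b₁ * (2 * (Real.sqrt (2 * c) / Real.sqrt b₁)) = K * Real.sqrt b₁ := by
        rw [hK]
        rw [show b₁ * (2 * (Real.sqrt (2 * c) / Real.sqrt b₁))
            = 2 * Real.sqrt (2 * c) * (b₁ / Real.sqrt b₁) by ring]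
        rw [Real.div_sqrt]
      linarith
    have hsb : Real.sqrt b₁ ≤ r / (K + 1) := by
      have h1 : Real.sqrt b₁ ≤ Real.sqrt ((r / (K + 1)) ^ 2) :=
        Real.sqrt_le_sqrt (min_le_right _ _)
      rwa [Real.sqrt_sq (by positivity)] at h1
    have : K * Real.sqrt b₁ ≤ K * (r / (K + 1)) :=
      mul_le_mul_of_nonneg_left hsb hKpos.le
    have hKr : K * (r / (K + 1)) < r := by
      rw [← mul_div_assoc, div_lt_iff₀ (by positivity : (0:ℝ) < K + 1)]
      nlinarith
    linarith
  -- large b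
  set b₂ : ℝ := r * c / (c - r) + 1 with hb₂def
  have hcr : 0 < c - r := by linarith
  have hb₂pos : 0 < b₂ := by
    have h0 : 0 ≤ r * c / (c - r) := div_nonneg (by positivity) hcr.le
    rw [hb₂def]
    linarith
  have hlarge : r < gg c b₂ := by
    have hbc : (0:ℝ) < b₂ + c := by positivity
    have h1 : c / (b₂ + c) < Real.log (1 + c / b₂) := log_lower c hc hb₂pos
    have h2 : b₂ * (c / (b₂ + c)) ≤ gg c b₂ := by
      unfold gg
      exact mul_le_mul_of_nonneg_left h1.le hb₂pos.le
    have hcancel : r * c / (c - r) * (c - r) = r * c :=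
      div_mul_cancel₀ (r * c) (ne_of_gt hcr)
    have h3 : r * (b₂ + c) < b₂ * c := by
      have hb₂eq : b₂ * (c - r) = r * c + (c - r) := by
        rw [hb₂def]; rw [add_mul, hcancel]; ring
      nlinarith
    have h4 : r < b₂ * (c / (b₂ + c)) := by
      rw [← mul_div_assoc, lt_div_iff₀ hbc]
      linarith
    linarith
  -- IVT
  have hb₁b₂ : b₁ < b₂ := by
    by_contra h
    push_neg at h
    have := (gg_strictMono c hc).le_iff_le (mem_Ioi.2 hb₂pos) (mem_Ioi.2 hb₁pos)
    have h2 : gg c b₂ ≤ gg c b₁ := this.2 h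
    linarith
  have hsub : Icc b₁ b₂ ⊆ Ioi 0 := fun x hx => lt_of_lt_of_le hb₁pos hx.1
  have hIVT := intermediate_value_Icc hb₁b₂.le ((gg_contOn c hc).mono hsub)
  have hr : r ∈ Icc (gg c b₁) (gg c b₂) := ⟨hsmall.le, hlarge.le⟩
  obtain ⟨b, hbmem, hgb⟩ := hIVT hr
  exact ⟨b, lt_of_lt_of_le hb₁pos hbmem.1, hgb⟩

/-- **Lemma 5**: let `u_c` be the inverse of the rate function `z_c(b) = b · log₂(1 + c/b)`,
`φ(η) = (1-η)T/a + (A/f)·log₂ η` and `v(η) = s/φ(η)`. Then the set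
`D = {η ∈ (0,1) : φ(η) > 0 and v(η) < c/ln 2}` is convex and `η ↦ u_c(v(η))` is convex on `D`. -/
theorem u_comp_v_convexOn (c : ℝ) (hc : 0 < c) (u : ℝ → ℝ)
    (hu : ∀ b : ℝ, 0 < b → u (b * Real.logb 2 (1 + c / b)) = b)
    (T a A f s : ℝ) (hT : 0 < T) (ha : 0 < a) (hA : 0 < A) (hf : 0 < f) (hs : 0 < s) :
    Convex ℝ {η : ℝ | η ∈ Set.Ioo (0 : ℝ) 1 ∧
      0 < (1 - η) * T / a + A / f * Real.logb 2 η ∧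
      s / ((1 - η) * T / a + A / f * Real.logb 2 η) < c / Real.log 2} ∧
    ConvexOn ℝ {η : ℝ | η ∈ Set.Ioo (0 : ℝ) 1 ∧
        0 < (1 - η) * T / a + A / f * Real.logb 2 η ∧
        s / ((1 - η) * T / a + A / f * Real.logb 2 η) < c / Real.log 2}
      (fun η : ℝ => u (s / ((1 - η) * T / a + A / f * Real.logb 2 η))) := by
  have hL : 0 < Real.log 2 := Real.log_pos one_lt_two
  -- characterization of `u` on `(0, c / log 2)`
  have hu' : ∀ b : ℝ, 0 < b → u (gg c b / Real.log 2) = b := by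
    intro b hb
    have h := hu b hb
    have heq : b * Real.logb 2 (1 + c / b) = gg c b / Real.log 2 := by
      unfold gg
      rw [Real.logb]
      ring
    rwa [heq] at h
  have hex : ∀ r : ℝ, 0 < r → r < c / Real.log 2 →
      ∃ b, 0 < b ∧ gg c b = r * Real.log 2 ∧ u r = b := by
    intro r hr0 hrc
    have h1 : 0 < r * Real.log 2 := mul_pos hr0 hL
    have h2 : r * Real.log 2 < c := by
      rw [lt_div_iff₀ hL] at hrc
      linarith
    obtain ⟨b, hb, hgb⟩ := gg_surj c hc h1 h2
    refine ⟨b, hb, hgb, ?_⟩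
    have h3 := hu' b hb
    rwa [hgb, mul_div_cancel_right₀ r (ne_of_gt hL)] at h3
  set D := {η : ℝ | η ∈ Set.Ioo (0 : ℝ) 1 ∧
      0 < (1 - η) * T / a + A / f * Real.logb 2 η ∧
      s / ((1 - η) * T / a + A / f * Real.logb 2 η) < c / Real.log 2} with hD
  -- the key combination estimates
  have key : ∀ x ∈ D, ∀ y ∈ D, ∀ p q : ℝ, 0 ≤ p → 0 ≤ q → p + q = 1 →
      (p * x + q * y ∈ D) ∧
      s / ((1 - (p * x + q * y)) * T / a + A / f * Real.logb 2 (p * x + q * y)) ≤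
        p * (s / ((1 - x) * T / a + A / f * Real.logb 2 x)) +
        q * (s / ((1 - y) * T / a + A / f * Real.logb 2 y)) := by
    rintro x ⟨hxI, hφx, hvx⟩ y ⟨hyI, hφy, hvy⟩ p q hp hq hpq
    obtain ⟨hx0, hx1⟩ := hxI
    obtain ⟨hy0, hy1⟩ := hyI
    set Px := (1 - x) * T / a + A / f * Real.logb 2 x with hPx
    set Py := (1 - y) * T / a + A / f * Real.logb 2 y with hPy
    set Pw := (1 - (p * x + q * y)) * T / a + A / f * Real.logb 2 (p * x + q * y) with hPw
    have hwI : p * x + q * y ∈ Set.Ioo (0 : ℝ) 1 := by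
      have h := (convex_Ioo (0 : ℝ) 1) (Set.mem_Ioo.2 ⟨hx0, hx1⟩) (Set.mem_Ioo.2 ⟨hy0, hy1⟩)
        hp hq hpq
      simpa [smul_eq_mul] using h
    have hlog : p * Real.log x + q * Real.log y ≤ Real.log (p * x + q * y) := by
      have h := strictConcaveOn_log_Ioi.concaveOn.2 (Set.mem_Ioi.2 hx0) (Set.mem_Ioi.2 hy0)
        hp hq hpq
      simpa [smul_eq_mul] using h
    have hφw : p * Px + q * Py ≤ Pw := by
      rw [hPx, hPy, hPw]
      simp only [Real.logb]
      have hAfL : (0 : ℝ) ≤ A / f / Real.log 2 := by positivity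
      have h2 := mul_le_mul_of_nonneg_left hlog hAfL
      have hq1 : q = 1 - p := by linarith
      subst hq1
      ring_nf at h2 ⊢
      linarith
    have hcomb_pos : 0 < p * Px + q * Py := by
      have h := (convex_Ioi (0 : ℝ)) (Set.mem_Ioi.2 hφx) (Set.mem_Ioi.2 hφy) hp hq hpq
      simpa [smul_eq_mul] using h
    have hφw_pos : 0 < Pw := lt_of_lt_of_le hcomb_pos hφw
    have h1 : s / Pw ≤ s / (p * Px + q * Py) :=
      div_le_div_of_nonneg_left hs.le hcomb_pos hφw
    have h2 : s / (p * Px + q * Py) ≤ p * (s / Px) + q * (s / Py) := by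
      have hne : p * (s / Px) + q * (s / Py) = (p * s * Py + q * s * Px) / (Px * Py) := by
        field_simp
      rw [hne, div_le_div_iff₀ hcomb_pos (mul_pos hφx hφy)]
      have hq1 : q = 1 - p := by linarith
      subst hq1
      nlinarith [mul_nonneg (mul_nonneg hp (by linarith : (0 : ℝ) ≤ 1 - p))
        (mul_nonneg hs.le (sq_nonneg (Px - Py)))]
    have hvle : s / Pw ≤ p * (s / Px) + q * (s / Py) := h1.trans h2
    have hvw_lt : s / Pw < c / Real.log 2 := by
      have hcomb_lt : p * (s / Px) + q * (s / Py) < c / Real.log 2 := by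
        have h := (convex_Iio (c / Real.log 2)) (Set.mem_Iio.2 hvx) (Set.mem_Iio.2 hvy)
          hp hq hpq
        simpa [smul_eq_mul] using h
      linarith
    exact ⟨⟨hwI, hφw_pos, hvw_lt⟩, hvle⟩
  have hDconv : Convex ℝ D := by
    intro x hx y hy p q hp hq hpq
    have h := (key x hx y hy p q hp hq hpq).1
    simpa [smul_eq_mul] using h
  refine ⟨hDconv, hDconv, ?_⟩
  intro x hx y hy p q hp hq hpq
  obtain ⟨hw, hvle⟩ := key x hx y hy p q hp hq hpq
  obtain ⟨hxI, hφx, hvx⟩ := hx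
  obtain ⟨hyI, hφy, hvy⟩ := hy
  obtain ⟨hwI, hφw, hvw⟩ := hw
  have hvx0 : 0 < s / ((1 - x) * T / a + A / f * Real.logb 2 x) := div_pos hs hφx
  have hvy0 : 0 < s / ((1 - y) * T / a + A / f * Real.logb 2 y) := div_pos hs hφy
  have hvw0 : 0 < s / ((1 - (p * x + q * y)) * T / a + A / f * Real.logb 2 (p * x + q * y)) := div_pos hs hφw
  have hrm0 : 0 < p * (s / ((1 - x) * T / a + A / f * Real.logb 2 x)) + q * (s / ((1 - y) * T / a + A / f * Real.logb 2 y)) := by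
    have h := (convex_Ioi (0 : ℝ)) (Set.mem_Ioi.2 hvx0) (Set.mem_Ioi.2 hvy0) hp hq hpq
    simpa [smul_eq_mul] using h
  have hrmlt : p * (s / ((1 - x) * T / a + A / f * Real.logb 2 x)) + q * (s / ((1 - y) * T / a + A / f * Real.logb 2 y)) < c / Real.log 2 := by
    have h := (convex_Iio (c / Real.log 2)) (Set.mem_Iio.2 hvx) (Set.mem_Iio.2 hvy) hp hq hpq
    simpa [smul_eq_mul] using h
  obtain ⟨bx, hbx, hgx, hux⟩ := hex (s / ((1 - x) * T / a + A / f * Real.logb 2 x)) hvx0 hvx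
  obtain ⟨b2, hb2, hgy, huy⟩ := hex (s / ((1 - y) * T / a + A / f * Real.logb 2 y)) hvy0 hvy
  obtain ⟨bw, hbw, hgw, huw⟩ := hex (s / ((1 - (p * x + q * y)) * T / a + A / f * Real.logb 2 (p * x + q * y))) hvw0 hvw
  obtain ⟨bm, hbm, hgm, hum⟩ := hex (p * (s / ((1 - x) * T / a + A / f * Real.logb 2 x)) + q * (s / ((1 - y) * T / a + A / f * Real.logb 2 y))) hrm0 hrmlt
  have h5 : gg c bw ≤ gg c bm := by
    rw [hgw, hgm]
    exact mul_le_mul_of_nonneg_right hvle hL.le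
  have h6 : bw ≤ bm :=
    ((gg_strictMono c hc).le_iff_le (Set.mem_Ioi.2 hbw) (Set.mem_Ioi.2 hbm)).1 h5
  have h7 := (gg_concave c hc).2 (Set.mem_Ioi.2 hbx) (Set.mem_Ioi.2 hb2) hp hq hpq
  simp only [smul_eq_mul] at h7
  have h8 : gg c bm ≤ gg c (p * bx + q * b2) := by
    rw [hgm]
    rw [hgx, hgy] at h7
    calc (p * (s / ((1 - x) * T / a + A / f * Real.logb 2 x)) + q * (s / ((1 - y) * T / a + A / f * Real.logb 2 y))) * Real.log 2
        = p * ((s / ((1 - x) * T / a + A / f * Real.logb 2 x)) * Real.log 2) + q * ((s / ((1 - y) * T / a + A / f * Real.logb 2 y)) * Real.log 2) := by ring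
      _ ≤ _ := h7
  have hpb : 0 < p * bx + q * b2 := by
    have h := (convex_Ioi (0 : ℝ)) (Set.mem_Ioi.2 hbx) (Set.mem_Ioi.2 hb2) hp hq hpq
    simpa [smul_eq_mul] using h
  have h9 : bm ≤ p * bx + q * b2 :=
    ((gg_strictMono c hc).le_iff_le (Set.mem_Ioi.2 hbm) (Set.mem_Ioi.2 hpb)).1 h8
  simp only [smul_eq_mul]
  rw [huw, hux, huy]
  linarith
end

section
/- Fix K ∈ ℕ, positive constants T, a, s, B, and for each k = 1,…,K positive constants A_k, f_k, c_k. Define φ_k(η) = (1−η)·T/a + (A_k/f_k)·log₂ η for η ∈ (0,1), and v_k(η) = s/φ_k(η) where φ_k(η) > 0. For each k let u_k : (0, c_k/ln 2) → (0,∞) be the inverse function of b ↦ b·log₂(1 + c_k/b). Let F(T) be the set of all (t, b, η) ∈ ℝ^K × ℝ^K × ℝ satisfying: (a) t_k ≤ φ_k(η) for all k; (b) t_k·b_k·log₂(1 + c_k/b_k) ≥ s for all k; (c) ∑_{k=1}^K b_k ≤ B; (d) 0 < η < 1; (e) t_k > 0 and b_k > 0 for all k. Then F(T) is nonempty if and only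 if there exists η ∈ (0,1) such that, for all k, φ_k(η) > 0 and v_k(η) < c_k/ln 2, and ∑_{k=1}^K u_k(v_k(η)) ≤ B. -/
open scoped BigOperators

/-- Maximal transmission time allowed at accuracy `η`: `φ(η) = (1-η)T/a + (A/f)·log₂ η`. -/
noncomputable def phi (T a A f η : ℝ) : ℝ := (1 - η) * T / a + A / f * Real.logb 2 η

/-- Feasibility of `(t, b, η)` for the reduced delay-minimization constraints (12a)–(12e). -/
def RedFeasible (K : ℕ) (T a s B : ℝ) (A f c : Fin K → ℝ)
    (t b : Fin K → ℝ) (η : ℝ) : Prop :=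
  (∀ k, t k ≤ phi T a (A k) (f k) η) ∧
  (∀ k, s ≤ t k * (b k * Real.logb 2 (1 + c k / b k))) ∧
  (∑ k, b k ≤ B) ∧
  (0 < η ∧ η < 1) ∧
  (∀ k, 0 < t k) ∧
  (∀ k, 0 < b k)


open Real Set Filter
open scoped Topology

noncomputable def zfun (c b : ℝ) : ℝ := b * Real.logb 2 (1 + c / b)

lemma zfun_eq (c b : ℝ) : zfun c b = b * Real.log (1 + c / b) / Real.log 2 := by
  simp [zfun, Real.logb]; ring

lemma zfun_pos {c b : ℝ} (hc : 0 < c) (hb : 0 < b) : 0 < zfun c b := by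
  have h1 : (1:ℝ) < 1 + c / b := by have := div_pos hc hb; linarith
  exact mul_pos hb (Real.logb_pos one_lt_two h1)

lemma zfun_lt {c b : ℝ} (hc : 0 < c) (hb : 0 < b) : zfun c b < c / Real.log 2 := by
  have hcb : 0 < c / b := div_pos hc hb
  have hlog : Real.log (1 + c / b) < c / b := by
    have := Real.log_lt_sub_one_of_pos (by linarith : (0:ℝ) < 1 + c/b) (by intro h; linarith)
    linarith
  have h2 : 0 < Real.log 2 := Real.log_pos one_lt_two
  rw [zfun_eq, div_lt_div_iff₀ h2 h2]
  have : b * Real.log (1 + c/b) < b * (c/b) := by nlinarith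
  have hbc : b * (c/b) = c := by field_simp
  nlinarith

lemma zfun_continuousOn {c : ℝ} (hc : 0 < c) : ContinuousOn (zfun c) (Ioi 0) := by
  intro b hb
  have hb' : (0:ℝ) < b := hb
  apply ContinuousAt.continuousWithinAt
  have h1 : ContinuousAt (fun b : ℝ => 1 + c / b) b :=
    (continuousAt_const.add (continuousAt_const.div continuousAt_id hb'.ne'))
  have h2 : (0:ℝ) < 1 + c / b := by positivity
  have h3 : ContinuousAt (Real.logb 2) (1 + c / b) := Real.continuousAt_logb (by positivity)
  have h4 : ContinuousAt ((Real.logb 2) ∘ fun b : ℝ => 1 + c / b) b := ContinuousAt.comp (x := b) h3 h1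
  exact continuousAt_id.mul h4

lemma zfun_tendsto {c : ℝ} (hc : 0 < c) : Tendsto (zfun c) (𝓝[>] 0) (𝓝 0) := by
  have hg : Tendsto (fun b : ℝ => (b * Real.log (1 + c) - b * Real.log b) / Real.log 2)
      (𝓝[>] 0) (𝓝 0) := by
    have h1 : Tendsto (fun b : ℝ => b * Real.log (1 + c) - b * Real.log b) (𝓝 0) (𝓝 0) := by
      have hcont := (continuous_id.mul (continuous_const : Continuous fun _ : ℝ => Real.log (1+c))).sub Real.continuous_mul_log
      refine (hcont.tendsto 0).mono_right (le_of_eq ?_)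
      simp
    have h2 : Tendsto (fun b : ℝ => b * Real.log (1 + c) - b * Real.log b)
        (𝓝[>] (0:ℝ)) (𝓝 0) := h1.mono_left nhdsWithin_le_nhds
    simpa using h2.div_const (Real.log 2)
  apply squeeze_zero' ?_ ?_ hg
  · filter_upwards [self_mem_nhdsWithin] with b hb
    exact (zfun_pos hc hb).le
  · filter_upwards [self_mem_nhdsWithin, Ioo_mem_nhdsGT one_pos] with b hb hb1
    have hb' : (0:ℝ) < b := hb
    have hb1' : b < 1 := hb1.2
    rw [zfun_eq, div_le_div_iff_of_pos_right (Real.log_pos one_lt_two)]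
    have hle : (1:ℝ) + c / b ≤ (1 + c) / b := by
      rw [le_div_iff₀ hb']
      have : (1 + c/b) * b = b + c := by field_simp
      rw [this]; linarith
    have hlog : Real.log (1 + c / b) ≤ Real.log (1 + c) - Real.log b := by
      calc Real.log (1 + c / b) ≤ Real.log ((1 + c) / b) :=
            Real.log_le_log (by positivity) hle
        _ = Real.log (1 + c) - Real.log b := Real.log_div (by positivity) hb'.ne'
    nlinarith [mul_le_mul_of_nonneg_left hlog hb'.le]

lemma zfun_surj_le {c b0 v : ℝ} (hc : 0 < c) (hb0 : 0 < b0) (hv : 0 < v)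
    (hvle : v ≤ zfun c b0) : ∃ b, 0 < b ∧ b ≤ b0 ∧ zfun c b = v := by
  have hev : ∀ᶠ b in 𝓝[>] (0:ℝ), zfun c b < v :=
    (zfun_tendsto hc) (Iio_mem_nhds hv)
  obtain ⟨ε, hεv, hε0, hεb0⟩ : ∃ ε, zfun c ε < v ∧ 0 < ε ∧ ε < b0 := by
    have h2 : Ioo (0:ℝ) b0 ∈ 𝓝[>] (0:ℝ) := Ioo_mem_nhdsGT hb0
    obtain ⟨ε, h1, h2⟩ := (hev.and (eventually_of_mem h2 fun x h => h)).exists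
    exact ⟨ε, h1, h2.1, h2.2⟩
  have hcont : ContinuousOn (zfun c) (Icc ε b0) :=
    (zfun_continuousOn hc).mono (fun x hx => lt_of_lt_of_le hε0 hx.1)
  obtain ⟨b, hb, hbeq⟩ := intermediate_value_Icc hεb0.le hcont ⟨hεv.le, hvle⟩
  exact ⟨b, lt_of_lt_of_le hε0 hb.1, hb.2, hbeq⟩

lemma zfun_surj_aux {c v r : ℝ} (hc : 0 < c) (hv : 0 < v) (hr1 : 1 < r)
    (hcr : c / r = v * Real.log 2) : ∃ b, 0 < b ∧ zfun c b = v := by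
  have hl2 : (0:ℝ) < Real.log 2 := Real.log_pos one_lt_two
  have hr0 : (0:ℝ) < r := by linarith
  have hrm : r - 1 ≠ 0 := by intro h; rw [sub_eq_zero] at h; rw [h] at hr1; exact lt_irrefl 1 hr1
  have hb0 : 0 < c / (r - 1) := div_pos hc (by linarith)
  have h1r : 1 + c / (c / (r - 1)) = r := by field_simp; ring
  have hb0r : c / (r - 1) * (1 - r⁻¹) = c / r := by
    field_simp
    try ring
  have hlog : 1 - r⁻¹ ≤ Real.log r := Real.one_sub_inv_le_log_of_pos hr0
  have hlb : v ≤ zfun c (c / (r - 1)) := by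
    rw [zfun_eq, le_div_iff₀ hl2, h1r]
    nlinarith [mul_le_mul_of_nonneg_left hlog hb0.le]
  obtain ⟨b, h1, _, h3⟩ := zfun_surj_le hc hb0 hv hlb
  exact ⟨b, h1, h3⟩

lemma zfun_surj {c v : ℝ} (hc : 0 < c) (hv : 0 < v) (hvlt : v < c / Real.log 2) :
    ∃ b, 0 < b ∧ zfun c b = v := by
  have hl2 : (0:ℝ) < Real.log 2 := Real.log_pos one_lt_two
  have hvl : v * Real.log 2 < c := (lt_div_iff₀ hl2).1 hvlt
  refine zfun_surj_aux hc hv ((one_lt_div (mul_pos hv hl2)).2 hvl) ?_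
  rw [div_div_eq_mul_div, mul_div_assoc]
  field_simp

/-- **Lemma 4**: with `u_k` the inverse of the rate function `b ↦ b·log₂(1 + c_k/b)` and
`v_k(η) = s/φ_k(η)`, the reduced feasibility set `F(T)` is nonempty iff there exists
`η ∈ (0,1)` with `φ_k(η) > 0` and `v_k(η) < c_k/ln 2` for all `k`, and
`∑_k u_k(v_k(η)) ≤ B`. -/
theorem redFeasible_iff_bandwidth_demand (K : ℕ) (T a s B : ℝ)
    (hT : 0 < T) (ha : 0 < a) (hs : 0 < s) (hB : 0 < B)
    (A f c : Fin K → ℝ) (hA : ∀ k, 0 < A k) (hf : ∀ k, 0 < f k) (hc : ∀ k, 0 < c k)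
    (u : Fin K → ℝ → ℝ)
    (hu : ∀ k, ∀ b : ℝ, 0 < b → u k (b * Real.logb 2 (1 + c k / b)) = b) :
    (∃ (t b : Fin K → ℝ) (η : ℝ), RedFeasible K T a s B A f c t b η) ↔
    (∃ η : ℝ, (0 < η ∧ η < 1) ∧
      (∀ k, 0 < phi T a (A k) (f k) η ∧
        s / phi T a (A k) (f k) η < c k / Real.log 2) ∧
      ∑ k, u k (s / phi T a (A k) (f k) η) ≤ B) := by
  constructor
  · rintro ⟨t, b, η, h1, h2, h3, hη, h5, h6⟩
    set φ : Fin K → ℝ := fun k => phi T a (A k) (f k) η with hφdef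
    have hφ : ∀ k, 0 < φ k := fun k => lt_of_lt_of_le (h5 k) (h1 k)
    have hv : ∀ k, 0 < s / φ k := fun k => div_pos hs (hφ k)
    have hvz : ∀ k, s / φ k ≤ zfun (c k) (b k) := by
      intro k
      have ht : s / t k ≤ zfun (c k) (b k) := by
        rw [div_le_iff₀ (h5 k)]
        rw [mul_comm]
        exact h2 k
      exact le_trans (div_le_div_of_nonneg_left hs.le (h5 k) (h1 k)) ht
    have hvlt : ∀ k, s / φ k < c k / Real.log 2 :=
      fun k => lt_of_le_of_lt (hvz k) (zfun_lt (hc k) (h6 k))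
    choose b' hb'pos hb'le hb'eq using
      fun k => zfun_surj_le (hc k) (h6 k) (hv k) (hvz k)
    refine ⟨η, hη, fun k => ⟨hφ k, hvlt k⟩, ?_⟩
    calc ∑ k, u k (s / φ k) = ∑ k, b' k := by
          refine Finset.sum_congr rfl (fun k _ => ?_)
          rw [← hb'eq k]
          exact hu k (b' k) (hb'pos k)
      _ ≤ ∑ k, b k := Finset.sum_le_sum fun k _ => hb'le k
      _ ≤ B := h3
  · rintro ⟨η, hη, hk, hsum⟩
    set φ : Fin K → ℝ := fun k => phi T a (A k) (f k) η with hφdef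
    have hφ : ∀ k, 0 < φ k := fun k => (hk k).1
    choose b hbpos hbeq using
      fun k => zfun_surj (hc k) (div_pos hs (hφ k)) (hk k).2
    refine ⟨φ, b, η, fun k => le_refl _, ?_, ?_, hη, hφ, hbpos⟩
    · intro k
      have : (φ k) * zfun (c k) (b k) = s := by
        rw [hbeq k, mul_div_assoc', mul_comm, mul_div_assoc, div_self (hφ k).ne', mul_one]
      exact le_of_eq this.symm
    · have heq : ∀ k, u k (s / φ k) = b k := by
        intro k
        rw [← hbeq k]
        exact hu k (b k) (hbpos k)
      calc ∑ k, b k = ∑ k, u k (s / φ k) :=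
            Finset.sum_congr rfl (fun k _ => (heq k).symm)
        _ ≤ B := hsum
end

section
/- Fix K ∈ ℕ, positive constants T, a, s, B, and for each k = 1,…,K positive constants A_k, f_k, c_k. Define φ_k(η) = (1−η)·T/a + (A_k/f_k)·log₂ η, v_k(η) = s/φ_k(η) where φ_k(η) > 0, and let u_k : (0, c_k/ln 2) → (0,∞) be the inverse function of b ↦ b·log₂(1 + c_k/b). Let D = {η ∈ (0,1) : for all k, φ_k(η) > 0 and v_k(η) < c_k/ln 2}, and define g : D → ℝ by g(η) = ∑_{k=1}^K u_k(v_k(η)). Let F(T) be the set of all (t, b, η) ∈ ℝ^K × ℝ^K × ℝ satisfying: (a) t_k ≤ φ_k(η) for all k; (b) t_k·b_k·log₂(1 + c_k/b_k) ≥ s for all k; (c) ∑_{k=1}^K b_k ≤ B; (d) 0 < η < 1; (e) t_k > 0 and b_k > 0 for all k. Suppose η* ∈ D is a point at which g is differentiable with derivative 0 (i.e. ∑_{k=1}^K u_k′(v_k(η*))·v_k′(η*) = 0). Then g(η*) = min_{η ∈ D} g(η), and F(T) is nonempty if and only if B ≥ g(η*). -/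
open scoped BigOperators

open Set Filter Topology


/-- natural-log rate function -/
noncomputable def Lf (c : ℝ) : ℝ → ℝ := fun b => b * Real.log (1 + c / b)

lemma log_one_add_lt {x : ℝ} (hx : 0 < x) : Real.log (1 + x) < x := by
  have := Real.log_lt_sub_one_of_pos (by linarith : (0:ℝ) < 1 + x) (by linarith)
  linarith

lemma lt_log_one_add {x : ℝ} (hx : 0 < x) : x / (1 + x) < Real.log (1 + x) := by
  have h0 : (0:ℝ) < 1 + x := by linarith
  have h1 : (0:ℝ) < (1 + x)⁻¹ := by positivity
  have h2 : ((1:ℝ) + x)⁻¹ ≠ 1 := by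
    intro h
    have : (1:ℝ) + x = 1 := by
      field_simp at h; linarith
    linarith
  have := Real.log_lt_sub_one_of_pos h1 h2
  rw [Real.log_inv] at this
  have h3 : (1 + x)⁻¹ - 1 = -(x / (1 + x)) := by field_simp; ring
  linarith [this.trans_eq h3]

lemma log_le_two_sqrt {x : ℝ} (hx : 0 ≤ x) : Real.log (1 + x) ≤ 2 * Real.sqrt x := by
  have h0 : (0:ℝ) ≤ 1 + x := by linarith
  have h1 : Real.log (1 + x) = 2 * Real.log (Real.sqrt (1 + x)) := by
    rw [Real.log_sqrt h0]; ring
  have h2 : Real.log (Real.sqrt (1 + x)) ≤ Real.sqrt (1 + x) - 1 :=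
    Real.log_le_sub_one_of_pos (Real.sqrt_pos.mpr (by linarith))
  have h3 : Real.sqrt (1 + x) ≤ 1 + Real.sqrt x := by
    have hs := Real.sq_sqrt hx
    have hn := Real.sqrt_nonneg x
    have : (1:ℝ) + x ≤ (1 + Real.sqrt x) ^ 2 := by nlinarith
    calc Real.sqrt (1 + x) ≤ Real.sqrt ((1 + Real.sqrt x) ^ 2) := Real.sqrt_le_sqrt this
      _ = 1 + Real.sqrt x := Real.sqrt_sq (by positivity)
  linarith

lemma hasDerivAt_Lf {c b : ℝ} (hc : 0 < c) (hb : 0 < b) :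
    HasDerivAt (Lf c) (Real.log (1 + c / b) - c / (b + c)) b := by
  have hbne : b ≠ 0 := hb.ne'
  have hpos : 0 < 1 + c / b := by positivity
  have h1 : HasDerivAt (fun x : ℝ => 1 + c / x) ((0 * b - c * 1) / b ^ 2) b :=
    ((hasDerivAt_const b c).div (hasDerivAt_id b) hbne).const_add 1
  have h2 : HasDerivAt (fun x : ℝ => Real.log (1 + c / x))
      (((0 * b - c * 1) / b ^ 2) / (1 + c / b)) b := h1.log hpos.ne'
  have h3 := (hasDerivAt_id b).mul h2
  refine h3.congr_deriv ?_
  simp only [id]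
  field_simp
  ring

lemma hasDerivAt_Lf' {c b : ℝ} (hc : 0 < c) (hb : 0 < b) :
    HasDerivAt (fun x : ℝ => Real.log (1 + c / x) - c / (x + c))
      (-(c ^ 2 / (b * (b + c) ^ 2))) b := by
  have hbne : b ≠ 0 := hb.ne'
  have hbc : b + c ≠ 0 := by positivity
  have hpos : 0 < 1 + c / b := by positivity
  have h1 : HasDerivAt (fun x : ℝ => 1 + c / x) ((0 * b - c * 1) / b ^ 2) b :=
    ((hasDerivAt_const b c).div (hasDerivAt_id b) hbne).const_add 1
  have h2 : HasDerivAt (fun x : ℝ => Real.log (1 + c / x))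
      (((0 * b - c * 1) / b ^ 2) / (1 + c / b)) b := h1.log hpos.ne'
  have h4 : HasDerivAt (fun x : ℝ => c / (x + c))
      ((0 * (b + c) - c * 1) / (b + c) ^ 2) b :=
    (hasDerivAt_const b c).div ((hasDerivAt_id b).add_const c) hbc
  have h5 := h2.sub h4
  refine h5.congr_deriv ?_
  field_simp
  ring

lemma Lf_contOn {c : ℝ} (hc : 0 < c) : ContinuousOn (Lf c) (Ioi 0) := fun x hx =>
  (hasDerivAt_Lf hc (mem_Ioi.mp hx)).continuousAt.continuousWithinAt

lemma Lf_strictMonoOn {c : ℝ} (hc : 0 < c) : StrictMonoOn (Lf c) (Ioi 0) := by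
  apply strictMonoOn_of_deriv_pos (convex_Ioi 0) (Lf_contOn hc)
  intro x hx
  rw [interior_Ioi] at hx
  have hx0 : 0 < x := hx
  rw [(hasDerivAt_Lf hc hx0).deriv]
  have h := lt_log_one_add (show 0 < c / x by positivity)
  have he : (c / x) / (1 + c / x) = c / (x + c) := by
    field_simp
  rw [he] at h
  linarith

lemma Lf_concaveOn {c : ℝ} (hc : 0 < c) : ConcaveOn ℝ (Ioi 0) (Lf c) := by
  apply AntitoneOn.concaveOn_of_deriv (convex_Ioi 0) (Lf_contOn hc)
  · intro x hx
    rw [interior_Ioi] at hx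
    exact (hasDerivAt_Lf hc hx).differentiableAt.differentiableWithinAt
  · rw [interior_Ioi]
    have hanti : StrictAntiOn (fun x : ℝ => Real.log (1 + c / x) - c / (x + c)) (Ioi 0) := by
      apply strictAntiOn_of_deriv_neg (convex_Ioi 0)
      · intro x hx
        exact (hasDerivAt_Lf' hc (mem_Ioi.mp hx)).continuousAt.continuousWithinAt
      · intro x hx
        rw [interior_Ioi] at hx
        rw [(hasDerivAt_Lf' hc hx).deriv]
        have hx0 : 0 < x := hx
        have : 0 < c ^ 2 / (x * (x + c) ^ 2) := by positivity
        linarith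
    intro x hx y hy hxy
    rw [(hasDerivAt_Lf hc hx).deriv, (hasDerivAt_Lf hc hy).deriv]
    rcases eq_or_lt_of_le hxy with h | h
    · subst h; exact le_refl _
    · exact (hanti hx hy h).le

lemma Lf_pos {c b : ℝ} (hc : 0 < c) (hb : 0 < b) : 0 < Lf c b := by
  have : 0 < Real.log (1 + c / b) := Real.log_pos (by
    have : 0 < c / b := by positivity
    linarith)
  exact mul_pos hb this

lemma Lf_lt {c b : ℝ} (hc : 0 < c) (hb : 0 < b) : Lf c b < c := by
  have h := log_one_add_lt (show 0 < c / b by positivity)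
  have := mul_lt_mul_of_pos_left h hb
  calc Lf c b < b * (c / b) := this
    _ = c := by field_simp

lemma Lf_surj {c m : ℝ} (hc : 0 < c) (hm0 : 0 < m) (hmc : m < c) :
    ∃ b : ℝ, 0 < b ∧ Lf c b = m := by
  set b₁ : ℝ := m ^ 2 / (8 * c) with hb₁def
  have hb₁ : 0 < b₁ := by positivity
  have hL1 : Lf c b₁ < m := by
    have h1 : Lf c b₁ ≤ b₁ * (2 * Real.sqrt (c / b₁)) := by
      have := log_le_two_sqrt (show (0:ℝ) ≤ c / b₁ by positivity)
      exact mul_le_mul_of_nonneg_left this hb₁.le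
    have h2 : b₁ * (2 * Real.sqrt (c / b₁)) = 2 * Real.sqrt (c * b₁) := by
      rw [show c * b₁ = (c / b₁) * b₁ ^ 2 by field_simp,
        Real.sqrt_mul (by positivity) _, Real.sqrt_sq hb₁.le]
      ring
    have h3 : Real.sqrt (c * b₁) < m / 2 := by
      rw [Real.sqrt_lt' (by positivity)]
      rw [hb₁def]
      rw [show c * (m ^ 2 / (8 * c)) = m ^ 2 / 8 by field_simp]
      nlinarith
    linarith
  set b₂ : ℝ := m * c / (c - m) + 1 with hb₂def
  have hb₂ : 0 < b₂ := by
    have : 0 < m * c / (c - m) := by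
      apply div_pos (by positivity); linarith
    rw [hb₂def]; linarith
  have hL2 : m < Lf c b₂ := by
    have h := lt_log_one_add (show 0 < c / b₂ by positivity)
    have he : (c / b₂) / (1 + c / b₂) = c / (b₂ + c) := by field_simp
    rw [he] at h
    have h2 : b₂ * (c / (b₂ + c)) < Lf c b₂ :=
      mul_lt_mul_of_pos_left h hb₂
    have h3 : m < b₂ * (c / (b₂ + c)) := by
      rw [show b₂ * (c / (b₂ + c)) = b₂ * c / (b₂ + c) by ring]
      rw [lt_div_iff₀ (by positivity)]
      have hkey : m * c / (c - m) < b₂ := by rw [hb₂def]; linarith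
      have : m * c / (c - m) * (c - m) < b₂ * (c - m) :=
        mul_lt_mul_of_pos_right hkey (by linarith)
      rw [div_mul_cancel₀ _ (by linarith : c - m ≠ 0)] at this
      nlinarith
    linarith
  have hb12 : b₁ ≤ b₂ := by
    by_contra h
    push_neg at h
    have := Lf_strictMonoOn hc (mem_Ioi.mpr hb₂) (mem_Ioi.mpr hb₁) h
    linarith
  have hsub : Icc b₁ b₂ ⊆ Ioi 0 := fun x hx => lt_of_lt_of_le hb₁ hx.1
  have := intermediate_value_Icc hb12 ((Lf_contOn hc).mono hsub)
  have hmmem : m ∈ Icc (Lf c b₁) (Lf c b₂) := ⟨hL1.le, hL2.le⟩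
  obtain ⟨b, hbmem, hbeq⟩ := this hmmem
  exact ⟨b, lt_of_lt_of_le hb₁ hbmem.1, hbeq⟩

noncomputable def Rf (c : ℝ) : ℝ → ℝ := fun b => b * Real.logb 2 (1 + c / b)

lemma log2_pos : (0:ℝ) < Real.log 2 := Real.log_pos one_lt_two

lemma Rf_eq (c b : ℝ) : Rf c b = Lf c b / Real.log 2 := by
  simp only [Rf, Lf, Real.logb]
  ring

lemma Rf_pos {c b : ℝ} (hc : 0 < c) (hb : 0 < b) : 0 < Rf c b := by
  rw [Rf_eq]; exact div_pos (Lf_pos hc hb) log2_pos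

lemma Rf_lt {c b : ℝ} (hc : 0 < c) (hb : 0 < b) : Rf c b < c / Real.log 2 := by
  rw [Rf_eq]
  exact div_lt_div_of_pos_right (Lf_lt hc hb) log2_pos

lemma Rf_strictMonoOn {c : ℝ} (hc : 0 < c) : StrictMonoOn (Rf c) (Ioi 0) := by
  intro x hx y hy hxy
  rw [Rf_eq, Rf_eq]
  exact div_lt_div_of_pos_right (Lf_strictMonoOn hc hx hy hxy) log2_pos

lemma Rf_surj {c y : ℝ} (hc : 0 < c) (hy : y ∈ Ioo 0 (c / Real.log 2)) :
    ∃ b : ℝ, 0 < b ∧ Rf c b = y := by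
  obtain ⟨b, hb, heq⟩ := Lf_surj hc (show 0 < y * Real.log 2 by
      exact mul_pos hy.1 log2_pos)
    (by
      have := hy.2
      rw [lt_div_iff₀ log2_pos] at this
      exact this)
  refine ⟨b, hb, ?_⟩
  rw [Rf_eq, heq]
  field_simp

lemma Rf_concaveOn {c : ℝ} (hc : 0 < c) : ConcaveOn ℝ (Ioi 0) (Rf c) := by
  have h := (Lf_concaveOn hc).smul (le_of_lt (show (0:ℝ) < (Real.log 2)⁻¹ by positivity))
  refine h.congr ?_
  intro b _
  beta_reduce
  rw [Rf_eq, smul_eq_mul]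
  ring

/-- positivity of convex combination -/
lemma combo_pos {α β p q : ℝ} (hα : 0 ≤ α) (hβ : 0 ≤ β) (hab : α + β = 1)
    (hp : 0 < p) (hq : 0 < q) : 0 < α * p + β * q := by
  rcases le_total p q with h | h
  · nlinarith [mul_nonneg hβ (sub_nonneg.2 h)]
  · nlinarith [mul_nonneg hα (sub_nonneg.2 h)]

lemma harmonic_ineq {s α β p q : ℝ} (hs : 0 < s) (hp : 0 < p) (hq : 0 < q)
    (hα : 0 ≤ α) (hβ : 0 ≤ β) (hab : α + β = 1) :
    s / (α * p + β * q) ≤ α * (s / p) + β * (s / q) := by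
  have hd : 0 < α * p + β * q := combo_pos hα hβ hab hp hq
  have hβ' : β = 1 - α := by linarith
  subst hβ'
  rw [div_le_iff₀ hd]
  have key : 0 ≤ α * (1 - α) * s * (p - q) ^ 2 :=
    mul_nonneg (mul_nonneg (mul_nonneg hα hβ) hs.le) (sq_nonneg _)
  have e : (α * (s / p) + (1 - α) * (s / q)) * (α * p + (1 - α) * q) - s
      = (α * (1 - α) * s * (p - q) ^ 2) / (p * q) := by
    field_simp
    ring
  nlinarith [div_nonneg key (le_of_lt (mul_pos hp hq))]

/-- concavity of phi on (0, ∞) -/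
lemma phi_concaveOn {T a A f : ℝ} (hT : 0 < T) (ha : 0 < a) (hA : 0 < A) (hf : 0 < f) :
    ConcaveOn ℝ (Ioi 0) (phi T a A f) := by
  have hlog := strictConcaveOn_log_Ioi.concaveOn.smul
      (le_of_lt (show (0:ℝ) < A / f / Real.log 2 by positivity))
  have hlin : ConcaveOn ℝ (Ioi 0) (fun η : ℝ => (1 - η) * T / a) := by
    refine ⟨convex_Ioi 0, ?_⟩
    intro x _ y _ α β hα hβ hab
    have : α • ((1 - x) * T / a) + β • ((1 - y) * T / a)
        - (1 - (α • x + β • y)) * T / a = (α + β - 1) * (T / a) := by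
      simp only [smul_eq_mul]; ring
    rw [hab] at this
    simp only [smul_eq_mul] at this ⊢
    linarith [this]
  have := hlin.add hlog
  refine this.congr ?_
  intro η _
  simp only [phi, Real.logb, Pi.add_apply, smul_eq_mul]
  ring

lemma convexOn_finset_sum {ι : Type*} (t : Finset ι) {S : Set ℝ} (hS : Convex ℝ S)
    {F : ι → ℝ → ℝ} (h : ∀ i ∈ t, ConvexOn ℝ S (F i)) :
    ConvexOn ℝ S (fun x => ∑ i ∈ t, F i x) := by
  classical
  induction t using Finset.induction_on with
  | empty => simpa using convexOn_const 0 hS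
  | insert a t' hnot ih =>
    simp only [Finset.sum_insert hnot]
    exact (h a (Finset.mem_insert_self a t')).add
      (ih fun i hi => h i (Finset.mem_insert_of_mem hi))

/-- A stationary point of a convex function on a convex set is a global minimum there. -/
lemma convexOn_isMinOn_of_deriv_zero {S : Set ℝ} {g : ℝ → ℝ} (hg : ConvexOn ℝ S g)
    {x : ℝ} (hx : x ∈ S) (hd : HasDerivAt g 0 x) :
    ∀ y ∈ S, g x ≤ g y := by
  intro y hy
  set d : ℝ := y - x with hddef
  have hinner : HasDerivAt (fun τ : ℝ => x + τ * d) d 0 := by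
    simpa using ((hasDerivAt_id (0:ℝ)).mul_const d).const_add x
  have hψ : HasDerivAt (fun τ : ℝ => g (x + τ * d)) 0 0 := by
    have hd' : HasDerivAt g 0 ((fun τ : ℝ => x + τ * d) (0:ℝ)) := by simpa using hd
    have := hd'.comp (0:ℝ) hinner
    rw [zero_mul] at this
    exact this
  have htend : Tendsto (slope (fun τ : ℝ => g (x + τ * d)) 0) (𝓝[≠] 0) (𝓝 0) :=
    hasDerivAt_iff_tendsto_slope.mp hψ
  have htend' : Tendsto (slope (fun τ : ℝ => g (x + τ * d)) 0) (𝓝[>] 0) (𝓝 0) :=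
    htend.mono_left (nhdsWithin_mono 0 (fun t ht => ne_of_gt ht))
  have hev : ∀ᶠ t in 𝓝[>] (0:ℝ),
      slope (fun τ : ℝ => g (x + τ * d)) 0 t ≤ g y - g x := by
    filter_upwards [Ioo_mem_nhdsGT_of_mem (show (0:ℝ) ∈ Ico (0:ℝ) 1 by
      exact ⟨le_refl _, zero_lt_one⟩)] with t ht
    have ht0 : 0 < t := ht.1
    have ht1 : t < 1 := ht.2
    have hcombo : g (x + t * d) ≤ (1 - t) * g x + t * g y := by
      have := hg.2 hx hy (by linarith : (0:ℝ) ≤ 1 - t) ht0.le (by ring)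
      simpa [smul_eq_mul, hddef, show (1 - t) * x + t * y = x + t * (y - x) by ring]
        using this
    rw [slope_def_field]
    simp only [sub_zero]
    rw [div_le_iff₀ ht0]
    have : g (x + 0 * d) = g x := by norm_num
    rw [this]
    nlinarith
  have := le_of_tendsto htend' hev
  linarith



/-- **Theorem 1**: with `u_k` the inverse of the rate function `b ↦ b·log₂(1 + c_k/b)`,
`v_k(η) = s/φ_k(η)`, `D = {η ∈ (0,1) : ∀ k, φ_k(η) > 0 ∧ v_k(η) < c_k/ln 2}` and
`g(η) = ∑_k u_k(v_k(η))`, if `g` is differentiable with derivative `0` at a point `η* ∈ D`,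
then `g(η*)` is the minimum of `g` on `D`, and the reduced feasibility set `F(T)` is nonempty
iff `B ≥ g(η*)`. -/
theorem redFeasible_iff_stationary_point (K : ℕ) (T a s B : ℝ)
    (hT : 0 < T) (ha : 0 < a) (hs : 0 < s) (hB : 0 < B)
    (A f c : Fin K → ℝ) (hA : ∀ k, 0 < A k) (hf : ∀ k, 0 < f k) (hc : ∀ k, 0 < c k)
    (u : Fin K → ℝ → ℝ)
    (hu : ∀ k, ∀ b : ℝ, 0 < b → u k (b * Real.logb 2 (1 + c k / b)) = b)
    (ηstar : ℝ)
    (hmem : ηstar ∈ {η : ℝ | η ∈ Set.Ioo (0 : ℝ) 1 ∧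
      ∀ k, 0 < phi T a (A k) (f k) η ∧
        s / phi T a (A k) (f k) η < c k / Real.log 2})
    (hstat : HasDerivAt (fun η : ℝ => ∑ k, u k (s / phi T a (A k) (f k) η)) 0 ηstar) :
    (∀ η ∈ {η : ℝ | η ∈ Set.Ioo (0 : ℝ) 1 ∧
        ∀ k, 0 < phi T a (A k) (f k) η ∧
          s / phi T a (A k) (f k) η < c k / Real.log 2},
      ∑ k, u k (s / phi T a (A k) (f k) ηstar) ≤ ∑ k, u k (s / phi T a (A k) (f k) η)) ∧
    ((∃ (t b : Fin K → ℝ) (η : ℝ), RedFeasible K T a s B A f c t b η) ↔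
      ∑ k, u k (s / phi T a (A k) (f k) ηstar) ≤ B) := by
  set D : Set ℝ := {η : ℝ | η ∈ Set.Ioo (0 : ℝ) 1 ∧
      ∀ k, 0 < phi T a (A k) (f k) η ∧
        s / phi T a (A k) (f k) η < c k / Real.log 2} with hDdef
  have hu' : ∀ (k : Fin K) (b : ℝ), 0 < b → u k (Rf (c k) b) = b := hu
  -- the equivalent description of the per-user constraint
  have hiff : ∀ (k : Fin K) (η : ℝ),
      (0 < phi T a (A k) (f k) η ∧ s / phi T a (A k) (f k) η < c k / Real.log 2) ↔
      s * Real.log 2 / c k < phi T a (A k) (f k) η := by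
    intro k η
    constructor
    · rintro ⟨h1, h2⟩
      rw [div_lt_div_iff₀ h1 log2_pos] at h2
      rw [div_lt_iff₀ (hc k)]
      linarith
    · intro h
      have h0 : 0 < s * Real.log 2 / c k := div_pos (mul_pos hs log2_pos) (hc k)
      have h1 : 0 < phi T a (A k) (f k) η := lt_trans h0 h
      refine ⟨h1, ?_⟩
      rw [div_lt_div_iff₀ h1 log2_pos]
      rw [div_lt_iff₀ (hc k)] at h
      linarith
  -- D is convex
  have hDeq : D = Ioo (0:ℝ) 1 ∩ ⋂ k, {η : ℝ | η ∈ Ioi (0:ℝ) ∧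
      s * Real.log 2 / c k < phi T a (A k) (f k) η} := by
    ext η
    simp only [hDdef, mem_setOf_eq, mem_inter_iff, mem_iInter]
    constructor
    · rintro ⟨h1, h2⟩
      exact ⟨h1, fun k => ⟨mem_Ioi.mpr h1.1, (hiff k η).mp (h2 k)⟩⟩
    · rintro ⟨h1, h2⟩
      exact ⟨h1, fun k => (hiff k η).mpr (h2 k).2⟩
  have hDconv : Convex ℝ D := by
    rw [hDeq]
    refine (convex_Ioo 0 1).inter (convex_iInter fun k => ?_)
    exact (phi_concaveOn hT ha (hA k) (hf k)).convex_gt _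
  -- basic facts for η ∈ D
  have hvmem : ∀ (k : Fin K), ∀ η ∈ D,
      s / phi T a (A k) (f k) η ∈ Ioo 0 (c k / Real.log 2) := by
    intro k η hη
    exact ⟨div_pos hs (hη.2 k).1, (hη.2 k).2⟩
  -- monotonicity of u on the relevant interval
  have umono : ∀ k : Fin K, MonotoneOn (u k) (Ioo 0 (c k / Real.log 2)) := by
    intro k x hx y hy hxy
    obtain ⟨p, hp, hpe⟩ := Rf_surj (hc k) hx
    obtain ⟨q, hq, hqe⟩ := Rf_surj (hc k) hy
    have hpq : p ≤ q := by
      by_contra h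
      push_neg at h
      have := Rf_strictMonoOn (hc k) (mem_Ioi.mpr hq) (mem_Ioi.mpr hp) h
      rw [hpe, hqe] at this
      linarith
    rw [← hpe, ← hqe, hu' k p hp, hu' k q hq]
    exact hpq
  -- convexity of u on the relevant interval
  have uconv : ∀ k : Fin K, ConvexOn ℝ (Ioo 0 (c k / Real.log 2)) (u k) := by
    intro k
    refine ⟨convex_Ioo _ _, ?_⟩
    intro x hx y hy α β hα hβ hab
    obtain ⟨p, hp, hpe⟩ := Rf_surj (hc k) hx
    obtain ⟨q, hq, hqe⟩ := Rf_surj (hc k) hy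
    have hcombo : α • x + β • y ∈ Ioo 0 (c k / Real.log 2) :=
      (convex_Ioo _ _) hx hy hα hβ hab
    have hpq : 0 < α * p + β * q := combo_pos hα hβ hab hp hq
    have hRge : α • x + β • y ≤ Rf (c k) (α * p + β * q) := by
      have := (Rf_concaveOn (hc k)).2 (mem_Ioi.mpr hp) (mem_Ioi.mpr hq) hα hβ hab
      simp only [smul_eq_mul] at this ⊢
      rw [← hpe, ← hqe]
      exact this
    have hRmem : Rf (c k) (α * p + β * q) ∈ Ioo 0 (c k / Real.log 2) :=
      ⟨Rf_pos (hc k) hpq, Rf_lt (hc k) hpq⟩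
    have h1 : u k (α • x + β • y) ≤ u k (Rf (c k) (α * p + β * q)) :=
      umono k hcombo hRmem hRge
    rw [hu' k _ hpq] at h1
    calc u k (α • x + β • y) ≤ α * p + β * q := h1
      _ = α • u k x + β • u k y := by
        rw [← hpe, ← hqe, hu' k p hp, hu' k q hq]; simp [smul_eq_mul]
  -- convexity of each composite term on D
  have wconv : ∀ k : Fin K, ConvexOn ℝ D (fun η => u k (s / phi T a (A k) (f k) η)) := by
    intro k
    refine ⟨hDconv, ?_⟩
    intro x hx y hy α β hα hβ hab
    have hφx : 0 < phi T a (A k) (f k) x := (hx.2 k).1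
    have hφy : 0 < phi T a (A k) (f k) y := (hy.2 k).1
    have hxy : α • x + β • y ∈ D := hDconv hx hy hα hβ hab
    have hφc : α * phi T a (A k) (f k) x + β * phi T a (A k) (f k) y ≤
        phi T a (A k) (f k) (α • x + β • y) := by
      have := (phi_concaveOn hT ha (hA k) (hf k)).2
        (mem_Ioi.mpr hx.1.1) (mem_Ioi.mpr hy.1.1) hα hβ hab
      simpa [smul_eq_mul] using this
    have hccpos : 0 < α * phi T a (A k) (f k) x + β * phi T a (A k) (f k) y :=
      combo_pos hα hβ hab hφx hφy
    have hv1 : s / phi T a (A k) (f k) (α • x + β • y) ≤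
        s / (α * phi T a (A k) (f k) x + β * phi T a (A k) (f k) y) := by
      gcongr
    have hv2 : s / (α * phi T a (A k) (f k) x + β * phi T a (A k) (f k) y) ≤
        α * (s / phi T a (A k) (f k) x) + β * (s / phi T a (A k) (f k) y) :=
      harmonic_ineq hs hφx hφy hα hβ hab
    have hm1 := hvmem k _ hxy
    have hm2 : α * (s / phi T a (A k) (f k) x) + β * (s / phi T a (A k) (f k) y) ∈
        Ioo 0 (c k / Real.log 2) := by
      have := (convex_Ioo (0:ℝ) (c k / Real.log 2)) (hvmem k x hx) (hvmem k y hy) hα hβ hab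
      simpa [smul_eq_mul] using this
    calc u k (s / phi T a (A k) (f k) (α • x + β • y))
        ≤ u k (α * (s / phi T a (A k) (f k) x) + β * (s / phi T a (A k) (f k) y)) :=
          umono k hm1 hm2 (le_trans hv1 hv2)
      _ ≤ α • u k (s / phi T a (A k) (f k) x) + β • u k (s / phi T a (A k) (f k) y) := by
          have := (uconv k).2 (hvmem k x hx) (hvmem k y hy) hα hβ hab
          simpa [smul_eq_mul] using this
  have hgconv : ConvexOn ℝ D (fun η => ∑ k, u k (s / phi T a (A k) (f k) η)) :=
    convexOn_finset_sum Finset.univ hDconv (fun k _ => wconv k)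
  have hmin := convexOn_isMinOn_of_deriv_zero hgconv hmem hstat
  refine ⟨hmin, ?_, ?_⟩
  · -- feasible → bound
    rintro ⟨t, b, η, h12a, h12b, h12c, hη, htpos, hbpos⟩
    have hφpos : ∀ k, 0 < phi T a (A k) (f k) η := fun k =>
      lt_of_lt_of_le (htpos k) (h12a k)
    have hRpos : ∀ k, 0 < Rf (c k) (b k) := fun k => Rf_pos (hc k) (hbpos k)
    have hvle : ∀ k, s / phi T a (A k) (f k) η ≤ Rf (c k) (b k) := by
      intro k
      rw [div_le_iff₀ (hφpos k)]
      calc s ≤ t k * (b k * Real.logb 2 (1 + c k / b k)) := h12b k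
        _ = t k * Rf (c k) (b k) := rfl
        _ ≤ phi T a (A k) (f k) η * Rf (c k) (b k) :=
            mul_le_mul_of_nonneg_right (h12a k) (hRpos k).le
        _ = Rf (c k) (b k) * phi T a (A k) (f k) η := by ring
    have hηD : η ∈ D := by
      refine ⟨⟨hη.1, hη.2⟩, fun k => ⟨hφpos k, ?_⟩⟩
      exact lt_of_le_of_lt (hvle k) (Rf_lt (hc k) (hbpos k))
    have hsum : ∑ k, u k (s / phi T a (A k) (f k) η) ≤ ∑ k, b k := by
      apply Finset.sum_le_sum
      intro k _
      have h1 : u k (s / phi T a (A k) (f k) η) ≤ u k (Rf (c k) (b k)) :=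
        umono k (hvmem k η hηD) ⟨hRpos k, Rf_lt (hc k) (hbpos k)⟩ (hvle k)
      rw [hu' k (b k) (hbpos k)] at h1
      exact h1
    exact le_trans (hmin η hηD) (le_trans hsum h12c)
  · -- bound → feasible
    intro hle
    choose b hbpos hbeq using fun k => Rf_surj (hc k) (hvmem k ηstar hmem)
    refine ⟨fun k => phi T a (A k) (f k) ηstar, b, ηstar, fun k => le_refl _, ?_, ?_,
      ⟨hmem.1.1, hmem.1.2⟩, fun k => (hmem.2 k).1, hbpos⟩
    · intro k
      have : (b k * Real.logb 2 (1 + c k / b k)) = s / phi T a (A k) (f k) ηstar := hbeq k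
      rw [this]
      rw [mul_div_cancel₀ s (hmem.2 k).1.ne']
    · have : ∀ k, b k = u k (s / phi T a (A k) (f k) ηstar) := by
        intro k
        rw [← hbeq k, hu' k (b k) (hbpos k)]
      calc ∑ k, b k = ∑ k, u k (s / phi T a (A k) (f k) ηstar) :=
            Finset.sum_congr rfl (fun k _ => this k)
        _ ≤ B := hle
end
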